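/- arXiv:2111.14050 — 2 statements merged into one kernel-verified Lean document; each statement's English description precedes it below -/
import Mathlib

section
/- Let Q ⊆ ℝ^n be a polytope, let c, v ∈ ℝ^n with v ≠ 0, and let x^0, x^1, …, x^k be a Shadow-rule path on Q with auxiliary vector v and objective c whose starting vertex x^0 maximizes ⟨c,·⟩ over the v-minimal face F = {x ∈ Q : ⟨v,x⟩ = min_{y ∈ Q} ⟨v,y⟩}. Then the length k of the path satisfies k ≤ |{⟨v,u⟩ : u a vertex of Q}| − 1, and some vertex of the path maximizes ⟨c,·⟩ over Q. -/
open Finset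

attribute [local instance] Classical.propDecidable

noncomputable section

/-- Standard dot product on `Fin n → ℝ`. -/
def dotR {n : ℕ} (c x : Fin n → ℝ) : ℝ := ∑ i, c i * x i

/-- A polytope: the convex hull of a finite nonempty set of points. -/
def IsPolytope {n : ℕ} (P : Set (Fin n → ℝ)) : Prop :=
  ∃ V : Finset (Fin n → ℝ), V.Nonempty ∧ P = convexHull ℝ (V : Set (Fin n → ℝ))

/-- A 0/1 polytope: the convex hull of a finite nonempty subset of `{0,1}^n`. -/
def IsPolytope01 {n : ℕ} (P : Set (Fin n → ℝ)) : Prop :=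
  ∃ V : Finset (Fin n → ℝ), V.Nonempty ∧ (∀ w ∈ V, ∀ i, w i = 0 ∨ w i = 1) ∧
    P = convexHull ℝ (V : Set (Fin n → ℝ))

/-- A vertex of `P` is an extreme point of `P`. -/
def IsVertex {n : ℕ} (P : Set (Fin n → ℝ)) (x : Fin n → ℝ) : Prop :=
  x ∈ P.extremePoints ℝ

/-- Two distinct vertices are adjacent when the segment between them is a face. -/
def Adjacent {n : ℕ} (P : Set (Fin n → ℝ)) (x y : Fin n → ℝ) : Prop :=
  IsVertex P x ∧ IsVertex P y ∧ x ≠ y ∧ IsExtreme ℝ P (segment ℝ x y)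

/-- `u` is a `w`-improving neighbor of `x`. -/
def ImpNbr {n : ℕ} (P : Set (Fin n → ℝ)) (w x u : Fin n → ℝ) : Prop :=
  Adjacent P x u ∧ dotR w x < dotR w u

/-- A Shadow-rule path on `P` with auxiliary vector `v` and objective `c`:
vertices `x 0, …, x k`, each step a `v`-improving neighbor maximizing the slope
`⟨c, u − xᵢ⟩ / ⟨v, u − xᵢ⟩` over all `v`-improving neighbors, and the last vertex
has no `v`-improving neighbor. -/
def ShadowPath {n : ℕ} (P : Set (Fin n → ℝ)) (c v : Fin n → ℝ) (k : ℕ)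
    (x : ℕ → Fin n → ℝ) : Prop :=
  (∀ i ≤ k, IsVertex P (x i)) ∧
  (∀ i < k, ImpNbr P v (x i) (x (i + 1)) ∧
    ∀ u, ImpNbr P v (x i) u →
      dotR c (u - x i) / dotR v (u - x i)
        ≤ dotR c (x (i + 1) - x i) / dotR v (x (i + 1) - x i)) ∧
  (∀ u, ¬ ImpNbr P v (x k) u)

/-- `f(u)` relative to `x0`: the largest index (in `1, …, n` labelling) where `u`
differs from `x0`, and `0` if there is none. -/
def lastIdx {n : ℕ} (x0 u : Fin n → ℝ) : ℕ :=
  (Finset.univ.filter fun j : Fin n => u j ≠ x0 j).sup fun j => (j : ℕ) + 1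

/-- `f(w)` for a 0/1 vector: the largest index (in `1, …, n` labelling) with
`w j = 1`, and `0` for the zero vector. -/
def lastOne {n : ℕ} (w : Fin n → ℝ) : ℕ :=
  (Finset.univ.filter fun j : Fin n => w j = 1).sup fun j => (j : ℕ) + 1

variable {n : ℕ}

def dotL (w : Fin n → ℝ) : (Fin n → ℝ) →ₗ[ℝ] ℝ where
  toFun := dotR w
  map_add' x y := by simp [dotR, mul_add, Finset.sum_add_distrib]
  map_smul' r x := by
    simp [dotR, Finset.mul_sum, smul_eq_mul, mul_left_comm]

lemma dotR_sub_right (w x y : Fin n → ℝ) : dotR w (x - y) = dotR w x - dotR w y :=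
  map_sub (dotL w) x y

lemma dotR_sub_smul_left (c v p : Fin n → ℝ) (t : ℝ) :
    dotR (c - t • v) p = dotR c p - t * dotR v p := by
  simp [dotR, sub_mul, Finset.sum_sub_distrib, Finset.mul_sum, mul_assoc]

lemma dotR_add_smul_left (c v p : Fin n → ℝ) (t : ℝ) :
    dotR (c + t • v) p = dotR c p + t * dotR v p := by
  simp [dotR, add_mul, Finset.sum_add_distrib, Finset.mul_sum, mul_assoc]

lemma dotR_comm (a b : Fin n → ℝ) : dotR a b = dotR b a := by
  simp [dotR, mul_comm]

lemma dotR_self_pos {a : Fin n → ℝ} (ha : a ≠ 0) : 0 < dotR a a := by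
  have h1 : ∃ i, a i ≠ 0 := by
    by_contra h; push_neg at h; exact ha (funext h)
  obtain ⟨i, hi⟩ := h1
  refine Finset.sum_pos' (fun j _ => mul_self_nonneg _) ⟨i, Finset.mem_univ i, ?_⟩
  exact mul_self_pos.mpr hi

lemma hull_le {V : Finset (Fin n → ℝ)} {w : Fin n → ℝ} {M : ℝ}
    (h : ∀ u ∈ V, dotR w u ≤ M) :
    ∀ p ∈ convexHull ℝ (V : Set (Fin n → ℝ)), dotR w p ≤ M := by
  intro p hp
  have := convexHull_min (s := (V : Set (Fin n → ℝ))) (t := {q | dotR w q ≤ M})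
    (fun u hu => h u hu) (convex_halfSpace_le (dotL w).isLinear M)
  exact this hp

lemma dotR_sum {α : Type*} (h : Fin n → ℝ) (s : Finset α) (f : α → Fin n → ℝ) :
    dotR h (∑ u ∈ s, f u) = ∑ u ∈ s, dotR h (f u) :=
  map_sum (dotL h) f s

lemma dotR_smul_right (h : Fin n → ℝ) (r : ℝ) (x : Fin n → ℝ) :
    dotR h (r • x) = r * dotR h x := by
  simp [dotR, Finset.mul_sum, mul_left_comm]

lemma dotR_add_right (h x y : Fin n → ℝ) : dotR h (x + y) = dotR h x + dotR h y :=
  map_add (dotL h) x y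


lemma face_isExtreme {V : Finset (Fin n → ℝ)} {h : Fin n → ℝ} {M : ℝ}
    (hM : ∀ u ∈ V, dotR h u ≤ M) :
    IsExtreme ℝ (convexHull ℝ (V : Set (Fin n → ℝ)))
      {p ∈ convexHull ℝ (V : Set (Fin n → ℝ)) | dotR h p = M} := by
  constructor
  · exact fun p hp => hp.1
  · rintro x₁ hx₁ x₂ hx₂ p ⟨hpQ, hpM⟩ ⟨a, b, ha, hb, hab, hpe⟩
    have h1 : dotR h x₁ ≤ M := hull_le hM x₁ hx₁
    have h2 : dotR h x₂ ≤ M := hull_le hM x₂ hx₂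
    have hsum : a * dotR h x₁ + b * dotR h x₂ = M := by
      have := congrArg (dotR h) hpe
      rw [dotR_add_right, dotR_smul_right, dotR_smul_right, hpM] at this
      exact this
    have e : a * (M - dotR h x₁) + b * (M - dotR h x₂) = 0 := by
      have hM' : (a + b) * M = M := by rw [hab, one_mul]
      nlinarith [hsum]
    have t1 : 0 ≤ a * (M - dotR h x₁) := mul_nonneg ha.le (by linarith)
    have t2 : 0 ≤ b * (M - dotR h x₂) := mul_nonneg hb.le (by linarith)
    have hx1M : dotR h x₁ = M := by
      have e1 : a * (M - dotR h x₁) = 0 := by linarith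
      rcases mul_eq_zero.mp e1 with h' | h'
      · exact absurd h' ha.ne'
      · linarith
    have hx2M : dotR h x₂ = M := by
      have e2 : b * (M - dotR h x₂) = 0 := by linarith
      rcases mul_eq_zero.mp e2 with h' | h'
      · exact absurd h' hb.ne'
      · linarith
    exact ⟨hx₁, hx1M⟩

lemma face_eq {V : Finset (Fin n → ℝ)} {h : Fin n → ℝ} {M : ℝ}
    (hM : ∀ u ∈ V, dotR h u ≤ M) :
    {p ∈ convexHull ℝ (V : Set (Fin n → ℝ)) | dotR h p = M}
      = convexHull ℝ ((V.filter fun u => dotR h u = M : Finset (Fin n → ℝ)) :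
          Set (Fin n → ℝ)) := by
  apply Set.Subset.antisymm
  · rintro p ⟨hpQ, hpM⟩
    rw [Finset.convexHull_eq] at hpQ
    obtain ⟨w, hw0, hw1, hcm⟩ := hpQ
    rw [Finset.centerMass_eq_of_sum_1 _ _ hw1] at hcm
    have hdp : ∑ u ∈ V, w u * dotR h u = M := by
      have h0 := congrArg (dotR h) hcm
      rw [dotR_sum] at h0
      simp only [dotR_smul_right, id] at h0
      rw [h0, hpM]
    have hz : ∑ u ∈ V, w u * (M - dotR h u) = 0 := by
      simp only [mul_sub]
      rw [Finset.sum_sub_distrib, ← Finset.sum_mul, hw1, hdp]; ring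
    have hzero : ∀ u ∈ V, w u * (M - dotR h u) = 0 :=
      (Finset.sum_eq_zero_iff_of_nonneg (fun u hu =>
        mul_nonneg (hw0 u hu) (sub_nonneg.mpr (hM u hu)))).mp hz
    have hkey2 : ∀ u ∈ V, w u ≠ 0 → dotR h u = M := by
      intro u hu hw
      rcases mul_eq_zero.mp (hzero u hu) with h' | h'
      · exact absurd h' hw
      · linarith [sub_eq_zero.mp h']
    have hkey : ∀ u ∈ V, u ∉ V.filter (fun u => dotR h u = M) → w u = 0 := by
      intro u hu hnotin
      by_contra hn
      exact hnotin (Finset.mem_filter.mpr ⟨hu, hkey2 u hu hn⟩)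
    rw [Finset.convexHull_eq]
    refine ⟨w, fun u hu => hw0 u (Finset.filter_subset _ _ hu), ?_, ?_⟩
    · rw [Finset.sum_filter_of_ne hkey2]
      exact hw1
    · rw [Finset.centerMass_eq_of_sum_1]
      · rw [← hcm]
        apply Finset.sum_subset (Finset.filter_subset _ _)
        intro u hu hnotin
        rw [hkey u hu hnotin, zero_smul]
      · rw [Finset.sum_filter_of_ne hkey2]
        exact hw1
  · intro p hp
    constructor
    · exact convexHull_mono (by exact_mod_cast Finset.filter_subset _ _) hp
    · have h1 : ∀ q ∈ convexHull ℝ ((V.filter fun u => dotR h u = M : Finset _) :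
          Set (Fin n → ℝ)), dotR h q ≤ M :=
        hull_le (fun u hu => le_of_eq (Finset.mem_filter.mp hu).2)
      have h2 : ∀ q ∈ convexHull ℝ ((V.filter fun u => dotR h u = M : Finset _) :
          Set (Fin n → ℝ)), M ≤ dotR h q := by
        intro q hq
        have := convexHull_min (s := ((V.filter fun u => dotR h u = M : Finset _) :
            Set (Fin n → ℝ))) (t := {q | M ≤ dotR h q})
          (fun u hu => le_of_eq (Finset.mem_filter.mp hu).2.symm)
          (convex_halfSpace_ge (dotL h).isLinear M)
        exact this hq
      exact le_antisymm (h1 p hp) (h2 p hp)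

lemma dotR_clm (f : (Fin n → ℝ) →L[ℝ] ℝ) (z : Fin n → ℝ) :
    dotR (fun i => f (Pi.single i 1)) z = f z := by
  conv_rhs => rw [show z = ∑ i, Pi.single i (z i) from (Finset.univ_sum_single z).symm]
  rw [map_sum]
  rw [dotR]
  apply Finset.sum_congr rfl
  intro i _
  have : Pi.single i (z i) = z i • (Pi.single i (1:ℝ) : Fin n → ℝ) := by
    ext j
    simp only [Pi.single_apply, Pi.smul_apply, smul_eq_mul]
    split <;> simp
  rw [this, map_smul, smul_eq_mul, mul_comm]

lemma exists_sep_vec {s : Set (Fin n → ℝ)} (hs : Convex ℝ s) (hcl : IsClosed s)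
    {z : Fin n → ℝ} (hz : z ∉ s) :
    ∃ g : Fin n → ℝ, ∀ a ∈ s, dotR g a < dotR g z := by
  obtain ⟨f, u, hfa, hfz⟩ := geometric_hahn_banach_closed_point hs hcl hz
  refine ⟨fun i => f (Pi.single i 1), fun a ha => ?_⟩
  rw [dotR_clm, dotR_clm]
  exact lt_trans (hfa a ha) hfz

lemma extremePoints_anti {A B : Set (Fin n → ℝ)} (hBA : B ⊆ A) {y : Fin n → ℝ}
    (hy : y ∈ A.extremePoints ℝ) (hyB : y ∈ B) : y ∈ B.extremePoints ℝ :=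
  inter_extremePoints_subset_extremePoints_of_subset hBA ⟨hyB, hy⟩

lemma exists_expose {V : Finset (Fin n → ℝ)} {y : Fin n → ℝ}
    (hy : y ∈ (convexHull ℝ (V : Set (Fin n → ℝ))).extremePoints ℝ) :
    ∃ g : Fin n → ℝ, ∀ u ∈ V, u ≠ y → dotR g u < dotR g y := by
  have hyV : y ∈ V := by
    have := extremePoints_convexHull_subset hy
    exact_mod_cast this
  have hnot : y ∉ convexHull ℝ ((V.erase y : Finset (Fin n → ℝ)) : Set (Fin n → ℝ)) := by
    intro hmem
    have hsub : convexHull ℝ ((V.erase y : Finset (Fin n → ℝ)) : Set (Fin n → ℝ))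
        ⊆ convexHull ℝ (V : Set (Fin n → ℝ)) :=
      convexHull_mono (by exact_mod_cast Finset.erase_subset y V)
    have hy2 := extremePoints_anti hsub hy hmem
    have := extremePoints_convexHull_subset hy2
    have : y ∈ V.erase y := by exact_mod_cast this
    exact (Finset.notMem_erase y V) this
  obtain ⟨g, hg⟩ := exists_sep_vec (convex_convexHull ℝ _)
    ((V.erase y).finite_toSet.isClosed_convexHull ℝ) hnot
  refine ⟨g, fun u hu hne => ?_⟩
  exact hg u (subset_convexHull ℝ _ (by exact_mod_cast Finset.mem_erase.mpr ⟨hne, hu⟩))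

lemma adjacent_lift {P F : Set (Fin n → ℝ)} (h : IsExtreme ℝ P F) {y u : Fin n → ℝ}
    (hadj : Adjacent F y u) : Adjacent P y u :=
  ⟨h.extremePoints_subset_extremePoints hadj.1,
   h.extremePoints_subset_extremePoints hadj.2.1, hadj.2.2.1, h.trans hadj.2.2.2⟩

lemma mem_convexHull_erase {V : Finset (Fin n → ℝ)} {z : Fin n → ℝ} (hz : z ∈ V)
    (hne : z ∉ (convexHull ℝ (V : Set (Fin n → ℝ))).extremePoints ℝ) :
    z ∈ convexHull ℝ ((V.erase z : Finset (Fin n → ℝ)) : Set (Fin n → ℝ)) := by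
  by_contra h
  obtain ⟨g, hg⟩ := exists_sep_vec (convex_convexHull ℝ _)
    ((V.erase z).finite_toSet.isClosed_convexHull ℝ) h
  have hM : ∀ u ∈ V, dotR g u ≤ dotR g z := by
    intro u hu
    by_cases hu' : u = z
    · exact le_of_eq (by rw [hu'])
    · exact (hg u (subset_convexHull ℝ _
        (by exact_mod_cast Finset.mem_erase.mpr ⟨hu', hu⟩))).le
  have hfilter : V.filter (fun u => dotR g u = dotR g z) = {z} := by
    ext u
    simp only [Finset.mem_filter, Finset.mem_singleton]
    constructor
    · rintro ⟨hu, he⟩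
      by_contra hu'
      exact absurd he (ne_of_lt (hg u (subset_convexHull ℝ _
        (by exact_mod_cast Finset.mem_erase.mpr ⟨hu', hu⟩))))
    · rintro rfl; exact ⟨hz, rfl⟩
  have hface := face_eq hM
  rw [hfilter] at hface
  simp only [Finset.coe_singleton, convexHull_singleton] at hface
  apply hne
  rw [mem_extremePoints]
  refine ⟨subset_convexHull ℝ _ (by exact_mod_cast hz), ?_⟩
  intro x₁ hx₁ x₂ hx₂ hseg
  obtain ⟨a, b, ha, hb, hab, he⟩ := hseg
  have h1 : dotR g x₁ ≤ dotR g z := hull_le hM x₁ hx₁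
  have h2 : dotR g x₂ ≤ dotR g z := hull_le hM x₂ hx₂
  have hsum : a * dotR g x₁ + b * dotR g x₂ = dotR g z := by
    have := congrArg (dotR g) he
    rw [dotR_add_right, dotR_smul_right, dotR_smul_right] at this
    exact this
  have e : a * (dotR g z - dotR g x₁) + b * (dotR g z - dotR g x₂) = 0 := by
    have hM' : (a + b) * dotR g z = dotR g z := by rw [hab, one_mul]
    nlinarith [hsum]
  have t1 : 0 ≤ a * (dotR g z - dotR g x₁) := mul_nonneg ha.le (by linarith)
  have t2 : 0 ≤ b * (dotR g z - dotR g x₂) := mul_nonneg hb.le (by linarith)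
  have hx1M : dotR g x₁ = dotR g z := by
    have e1 : a * (dotR g z - dotR g x₁) = 0 := by linarith
    rcases mul_eq_zero.mp e1 with h' | h'
    · exact absurd h' ha.ne'
    · linarith
  have hx2M : dotR g x₂ = dotR g z := by
    have e2 : b * (dotR g z - dotR g x₂) = 0 := by linarith
    rcases mul_eq_zero.mp e2 with h' | h'
    · exact absurd h' hb.ne'
    · linarith
  constructor
  · have : x₁ ∈ ({p ∈ convexHull ℝ (V : Set (Fin n → ℝ)) | dotR g p = dotR g z}) :=
      ⟨hx₁, hx1M⟩
    rw [hface] at this; exact this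
  · have : x₂ ∈ ({p ∈ convexHull ℝ (V : Set (Fin n → ℝ)) | dotR g p = dotR g z}) :=
      ⟨hx₂, hx2M⟩
    rw [hface] at this; exact this

lemma hull_erase_eq {V : Finset (Fin n → ℝ)} {z : Fin n → ℝ} (hz : z ∈ V)
    (hne : z ∉ (convexHull ℝ (V : Set (Fin n → ℝ))).extremePoints ℝ) :
    convexHull ℝ ((V.erase z : Finset (Fin n → ℝ)) : Set (Fin n → ℝ))
      = convexHull ℝ (V : Set (Fin n → ℝ)) := by
  apply Set.Subset.antisymm
  · exact convexHull_mono (by exact_mod_cast Finset.erase_subset z V)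
  · apply convexHull_min _ (convex_convexHull ℝ _)
    intro u hu
    by_cases hu' : u = z
    · rw [hu']; exact mem_convexHull_erase hz hne
    · exact subset_convexHull ℝ _ (by exact_mod_cast Finset.mem_erase.mpr ⟨hu', by exact_mod_cast hu⟩)

lemma exists_between_fn {A : Set (Fin n → ℝ)} {y z₁ z₂ : Fin n → ℝ}
    (hz₁ : z₁ ∈ A.extremePoints ℝ) (hz₂ : z₂ ∈ A.extremePoints ℝ) (hyA : y ∈ A)
    (h1 : z₁ ≠ y) (h2 : z₂ ≠ y) (h12 : z₁ ≠ z₂) :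
    ∃ w : Fin n → ℝ, dotR w z₁ < dotR w y ∧ dotR w y < dotR w z₂ := by
  have ha0 : y - z₁ ≠ 0 := sub_ne_zero.mpr (Ne.symm h1)
  have hb0 : z₂ - y ≠ 0 := sub_ne_zero.mpr h2
  suffices h : ∃ w : Fin n → ℝ, 0 < dotR w (y - z₁) ∧ 0 < dotR w (z₂ - y) by
    obtain ⟨w, hwa, hwb⟩ := h
    rw [dotR_sub_right] at hwa hwb
    exact ⟨w, by linarith, by linarith⟩
  by_cases hdep : ∃ s : ℝ, z₂ - y = s • (y - z₁)
  · obtain ⟨s, hs⟩ := hdep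
    have hs0 : s ≠ 0 := by
      rintro rfl; rw [zero_smul] at hs; exact hb0 hs
    rcases lt_or_gt_of_ne hs0 with hneg | hpos
    · exfalso
      have hz2 : z₂ = s • (y - z₁) + y := by
        rw [← hs]; module
      rcases lt_trichotomy s (-1) with hc | hc | hc
      · -- z₁ ∈ openSegment z₂ y
        have hseg : z₁ ∈ openSegment ℝ z₂ y := by
          refine ⟨-1/s, 1 + 1/s, div_pos_of_neg_of_neg (by norm_num) hneg, ?_, by field_simp; ring, ?_⟩
          · have : (s+1)/s > 0 := div_pos_of_neg_of_neg (by linarith) hneg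
            have e : 1 + 1/s = (s+1)/s := by field_simp
            linarith [e ▸ this]
          · rw [hz2]
            match_scalars <;> field_simp <;> ring_nf
        obtain ⟨hz₂', _⟩ := (mem_extremePoints.mp hz₁).2 z₂ hz₂.1 y hyA hseg
        exact h12 hz₂'.symm
      · apply h12
        rw [hc] at hz2
        have : z₂ = z₁ := by rw [hz2]; module
        exact (this.symm)
      · -- z₂ ∈ openSegment y z₁
        have hseg : z₂ ∈ openSegment ℝ y z₁ := by
          refine ⟨1 + s, -s, by linarith, by linarith, by ring, ?_⟩
          rw [hz2]; module
        obtain ⟨hy', _⟩ := (mem_extremePoints.mp hz₂).2 y hyA z₁ hz₁.1 hseg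
        exact h2 hy'.symm
    · exact ⟨y - z₁, dotR_self_pos ha0, by
        rw [hs, dotR_smul_right]; exact mul_pos hpos (dotR_self_pos ha0)⟩
  · set a := y - z₁ with ha_def
    set b := z₂ - y with hb_def
    have haa : 0 < dotR a a := dotR_self_pos ha0
    set s₀ : ℝ := dotR a b / dotR a a with hs₀
    set u : Fin n → ℝ := b - s₀ • a with hu_def
    have hu0 : u ≠ 0 := by
      intro h'
      exact hdep ⟨s₀, by rw [← sub_eq_zero]; exact h'⟩
    have huu : 0 < dotR u u := dotR_self_pos hu0
    have hau : dotR a u = 0 := by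
      rw [hu_def, dotR_sub_right, dotR_smul_right, hs₀]
      field_simp
      ring
    set ε : ℝ := if 0 ≤ s₀ then 1 else dotR u u / (2 * (-s₀) * dotR a a) with hε
    have hεpos : 0 < ε := by
      rw [hε]; split
      · norm_num
      · next h' =>
        push_neg at h'
        apply div_pos huu
        nlinarith
    refine ⟨u + ε • a, ?_, ?_⟩
    · rw [dotR_add_smul_left, dotR_comm u a, hau, zero_add]
      exact mul_pos hεpos haa
    · have hb_eq : b = u + s₀ • a := by rw [hu_def]; module
      rw [hb_eq, dotR_add_right, dotR_smul_right]
      rw [dotR_add_smul_left, dotR_add_smul_left, dotR_comm u a, hau]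
      rw [hε]
      split
      · next h' =>
        have h0 : 0 ≤ s₀ * (0 + 1 * dotR a a) := by
          rw [zero_add, one_mul]; exact mul_nonneg h' haa.le
        nlinarith [huu]
      · next h' =>
        push_neg at h'
        rw [mul_zero, add_zero, zero_add]
        have hkey : ∀ K B sc : ℝ, 0 < K → 0 < B → sc < 0 →
            sc * (K / (2 * -sc * B) * B) = -K/2 := by
          intro K B sc hK hB hsc
          field_simp [hsc.ne, hB.ne']
        rw [hkey _ _ _ huu haa h']
        linarith

lemma face_step {V : Finset (Fin n → ℝ)} {y w : Fin n → ℝ}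
    (hy : y ∈ (convexHull ℝ (V : Set (Fin n → ℝ))).extremePoints ℝ)
    (hlow : ∃ z ∈ V, z ≠ y ∧ dotR w z ≤ dotR w y)
    (hhigh : ∃ z ∈ V, dotR w y < dotR w z) :
    ∃ W : Finset (Fin n → ℝ), W ⊆ V ∧ W.card < V.card ∧
      y ∈ (convexHull ℝ (W : Set (Fin n → ℝ))).extremePoints ℝ ∧
      (∃ p ∈ W, dotR w y < dotR w p) ∧
      IsExtreme ℝ (convexHull ℝ (V : Set (Fin n → ℝ)))
        (convexHull ℝ (W : Set (Fin n → ℝ))) := by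
  have hyV : y ∈ V := by exact_mod_cast extremePoints_convexHull_subset hy
  obtain ⟨g, hg⟩ := exists_expose hy
  set D := V.filter (fun u => dotR w y < dotR w u) with hD_def
  have hD : D.Nonempty := by
    obtain ⟨z, hzV, hz⟩ := hhigh
    exact ⟨z, Finset.mem_filter.mpr ⟨hzV, hz⟩⟩
  set f : (Fin n → ℝ) → ℝ := fun u => (dotR g y - dotR g u) / (dotR w u - dotR w y)
    with hf_def
  set t := D.inf' hD f with ht_def
  have hmemD : ∀ u ∈ D, u ∈ V ∧ dotR w y < dotR w u := fun u hu =>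
    Finset.mem_filter.mp hu
  have hfpos : ∀ u ∈ D, 0 < f u := by
    intro u hu
    obtain ⟨huV, huw⟩ := hmemD u hu
    have huy : u ≠ y := fun he => absurd huw (by rw [he]; exact lt_irrefl _)
    exact div_pos (sub_pos.mpr (hg u huV huy)) (sub_pos.mpr huw)
  have htpos : 0 < t := by
    rw [ht_def, Finset.lt_inf'_iff]
    exact hfpos
  set h := g + t • w with hh_def
  have hdot : ∀ p, dotR h p = dotR g p + t * dotR w p := fun p => dotR_add_smul_left g w p t
  have hmax : ∀ u ∈ V, dotR h u ≤ dotR h y := by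
    intro u huV
    rw [hdot, hdot]
    by_cases huy : u = y
    · rw [huy]
    by_cases huD : u ∈ D
    · have hle : t ≤ f u := Finset.inf'_le f huD
      have hwu : 0 < dotR w u - dotR w y := sub_pos.mpr (hmemD u huD).2
      have := (le_div_iff₀ hwu).mp hle
      linarith
    · have hwle : dotR w u ≤ dotR w y := by
        by_contra hcon
        exact huD (Finset.mem_filter.mpr ⟨huV, lt_of_not_ge hcon⟩)
      have := hg u huV huy
      nlinarith
  obtain ⟨u₀, hu₀D, hu₀f⟩ := Finset.exists_mem_eq_inf' hD f
  have hu₀V := (hmemD u₀ hu₀D).1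
  have hu₀w := (hmemD u₀ hu₀D).2
  have hstar : dotR h u₀ = dotR h y := by
    rw [hdot, hdot]
    have hwu : dotR w u₀ - dotR w y ≠ 0 := (sub_pos.mpr hu₀w).ne'
    rw [← ht_def] at hu₀f
    have : t * (dotR w u₀ - dotR w y) = dotR g y - dotR g u₀ := by
      rw [hu₀f]
      simp only [hf_def]
      exact div_mul_cancel₀ _ hwu
    linarith
  set W := V.filter (fun u => dotR h u = dotR h y) with hW_def
  have hWsub : W ⊆ V := Finset.filter_subset _ _
  have hyW : y ∈ W := Finset.mem_filter.mpr ⟨hyV, rfl⟩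
  have hWlt : W.card < V.card := by
    obtain ⟨z, hzV, hzy, hzw⟩ := hlow
    have hzne : dotR h z < dotR h y := by
      rw [hdot, hdot]
      have h1 := hg z hzV hzy
      nlinarith
    apply Finset.card_lt_card
    refine ⟨hWsub, fun hsub => ?_⟩
    have := Finset.mem_filter.mp (hsub hzV)
    exact hzne.ne this.2
  have hface := face_eq hmax
  rw [← hW_def] at hface
  have hWhull : convexHull ℝ (W : Set (Fin n → ℝ)) ⊆ convexHull ℝ (V : Set (Fin n → ℝ)) :=
    convexHull_mono (by exact_mod_cast hWsub)
  refine ⟨W, hWsub, hWlt, ?_, ⟨u₀, Finset.mem_filter.mpr ⟨hu₀V, hstar⟩, hu₀w⟩, ?_⟩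
  · exact extremePoints_anti hWhull hy (subset_convexHull ℝ _ (by exact_mod_cast hyW))
  · have := face_isExtreme hmax
    rwa [hface] at this

lemma lemAB : ∀ N : ℕ,
    (∀ V : Finset (Fin n → ℝ), V.card ≤ N → ∀ y : Fin n → ℝ,
      y ∈ (convexHull ℝ (V : Set (Fin n → ℝ))).extremePoints ℝ →
      (∃ p ∈ convexHull ℝ (V : Set (Fin n → ℝ)), p ≠ y) →
      ∃ u, Adjacent (convexHull ℝ (V : Set (Fin n → ℝ))) y u) ∧
    (∀ V : Finset (Fin n → ℝ), V.card ≤ N → ∀ y w : Fin n → ℝ,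
      y ∈ (convexHull ℝ (V : Set (Fin n → ℝ))).extremePoints ℝ →
      (∃ p ∈ convexHull ℝ (V : Set (Fin n → ℝ)), dotR w y < dotR w p) →
      ∃ u, ImpNbr (convexHull ℝ (V : Set (Fin n → ℝ))) w y u) := by
  intro N
  induction N with
  | zero =>
    constructor
    · intro V hcard y hy _
      rw [Nat.le_zero, Finset.card_eq_zero] at hcard
      subst hcard
      simp only [Finset.coe_empty, convexHull_empty] at hy
      exact absurd hy.1 (Set.notMem_empty y)
    · intro V hcard y w hy _
      rw [Nat.le_zero, Finset.card_eq_zero] at hcard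
      subst hcard
      simp only [Finset.coe_empty, convexHull_empty] at hy
      exact absurd hy.1 (Set.notMem_empty y)
  | succ N ih =>
    obtain ⟨ihB, ihA⟩ := ih
    have hB : ∀ V : Finset (Fin n → ℝ), V.card ≤ N + 1 → ∀ y : Fin n → ℝ,
        y ∈ (convexHull ℝ (V : Set (Fin n → ℝ))).extremePoints ℝ →
        (∃ p ∈ convexHull ℝ (V : Set (Fin n → ℝ)), p ≠ y) →
        ∃ u, Adjacent (convexHull ℝ (V : Set (Fin n → ℝ))) y u := by
      intro V hcard y hy hp
      have hyV : y ∈ V := by exact_mod_cast extremePoints_convexHull_subset hy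
      by_cases hall : ∀ z ∈ V, z ∈ (convexHull ℝ (V : Set (Fin n → ℝ))).extremePoints ℝ
      · obtain ⟨p, hpQ, hpy⟩ := hp
        have hzex : ∃ z ∈ V, z ≠ y := by
          by_contra hcon
          push_neg at hcon
          have hsub : (V : Set (Fin n → ℝ)) ⊆ {y} := by
            intro u hu
            exact hcon u (by exact_mod_cast hu)
          have := convexHull_min hsub (convex_singleton y) hpQ
          exact hpy this
        obtain ⟨z, hzV, hzy⟩ := hzex
        by_cases hz2 : ∃ z₂ ∈ V, z₂ ≠ y ∧ z₂ ≠ z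
        · obtain ⟨z₂, hz₂V, hz₂y, hz₂z⟩ := hz2
          obtain ⟨w, hw1, hw2⟩ := exists_between_fn (hall z hzV) (hall z₂ hz₂V)
            (subset_convexHull ℝ _ (by exact_mod_cast hyV)) hzy hz₂y (Ne.symm hz₂z)
          obtain ⟨W, hWsub, hWlt, hyW, ⟨u₀, hu₀W, hu₀w⟩, hext⟩ :=
            face_step hy ⟨z, hzV, hzy, hw1.le⟩ ⟨z₂, hz₂V, hw2⟩
          obtain ⟨u, hu⟩ := ihB W (by omega) y hyW
            ⟨u₀, subset_convexHull ℝ _ (by exact_mod_cast hu₀W), fun he => by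
              rw [he] at hu₀w; exact lt_irrefl _ hu₀w⟩
          exact ⟨u, adjacent_lift hext hu⟩
        · push_neg at hz2
          have hVset : (V : Set (Fin n → ℝ)) = {y, z} := by
            ext u
            constructor
            · intro hu
              have huV : u ∈ V := by exact_mod_cast hu
              by_cases huy : u = y
              · exact Or.inl huy
              · exact Or.inr (hz2 u huV huy)
            · rintro (rfl | rfl)
              · exact_mod_cast hyV
              · exact_mod_cast hzV
          refine ⟨z, hy, hall z hzV, Ne.symm hzy, ?_⟩
          rw [hVset, convexHull_pair]
          try exact IsExtreme.refl ℝ _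
      · push_neg at hall
        obtain ⟨z, hzV, hznex⟩ := hall
        have heq := hull_erase_eq hzV hznex
        have hcard' : (V.erase z).card ≤ N := by
          have h1 := Finset.card_erase_of_mem hzV
          have h2 : 1 ≤ V.card := Finset.card_pos.mpr ⟨z, hzV⟩
          omega
        obtain ⟨u, hu⟩ := ihB (V.erase z) hcard' y (by rw [heq]; exact hy)
          (by rw [heq]; exact hp)
        rw [heq] at hu
        exact ⟨u, hu⟩
    refine ⟨hB, ?_⟩
    intro V hcard y w hy hp
    obtain ⟨p, hpQ, hpw⟩ := hp
    have hhigh : ∃ z ∈ V, dotR w y < dotR w z := by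
      by_contra hcon
      push_neg at hcon
      have := hull_le hcon p hpQ
      linarith
    by_cases hlow : ∃ z ∈ V, z ≠ y ∧ dotR w z ≤ dotR w y
    · obtain ⟨W, hWsub, hWlt, hyW, ⟨u₀, hu₀W, hu₀w⟩, hext⟩ := face_step hy hlow hhigh
      obtain ⟨u, hadj, hlt⟩ := ihA W (by omega) y w hyW
        ⟨u₀, subset_convexHull ℝ _ (by exact_mod_cast hu₀W), hu₀w⟩
      exact ⟨u, adjacent_lift hext hadj, hlt⟩
    · push_neg at hlow
      obtain ⟨z, hzV, hzw⟩ := hhigh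
      have hzy : z ≠ y := fun he => by rw [he] at hzw; exact lt_irrefl _ hzw
      obtain ⟨u, hadj⟩ := hB V hcard y hy
        ⟨z, subset_convexHull ℝ _ (by exact_mod_cast hzV), hzy⟩
      have huV : u ∈ V := by exact_mod_cast extremePoints_convexHull_subset hadj.2.1
      have huy : u ≠ y := Ne.symm hadj.2.2.1
      exact ⟨u, hadj, hlow u huV huy⟩

lemma lemA {V : Finset (Fin n → ℝ)} {y w : Fin n → ℝ}
    (hy : y ∈ (convexHull ℝ (V : Set (Fin n → ℝ))).extremePoints ℝ)
    (hp : ∃ p ∈ convexHull ℝ (V : Set (Fin n → ℝ)), dotR w y < dotR w p) :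
    ∃ u, ImpNbr (convexHull ℝ (V : Set (Fin n → ℝ))) w y u :=
  (lemAB V.card).2 V le_rfl y w hy hp

lemma lemC {V : Finset (Fin n → ℝ)} {c v y : Fin n → ℝ} {l1 l2 : ℝ}
    (hy : y ∈ (convexHull ℝ (V : Set (Fin n → ℝ))).extremePoints ℝ)
    (hle : l2 ≤ l1)
    (h1 : ∀ u ∈ V, dotR c u - dotR c y ≤ l1 * (dotR v u - dotR v y))
    (h2 : ∀ u, ImpNbr (convexHull ℝ (V : Set (Fin n → ℝ))) v y u →
      dotR c u - dotR c y ≤ l2 * (dotR v u - dotR v y)) :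
    ∀ u ∈ V, dotR c u - dotR c y ≤ l2 * (dotR v u - dotR v y) := by
  by_contra hcon
  push_neg at hcon
  obtain ⟨u₀, hu₀V, hu₀⟩ := hcon
  have hu₀v : 0 < dotR v u₀ - dotR v y := by
    by_contra hc
    push_neg at hc
    have := h1 u₀ hu₀V
    nlinarith
  set D := V.filter (fun u => 0 < dotR v u - dotR v y) with hD_def
  have hu₀D : u₀ ∈ D := Finset.mem_filter.mpr ⟨hu₀V, hu₀v⟩
  have hD : D.Nonempty := ⟨u₀, hu₀D⟩
  set f : (Fin n → ℝ) → ℝ := fun u => (dotR c u - dotR c y) / (dotR v u - dotR v y)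
    with hf_def
  set a := D.sup' hD f with ha_def
  have hmemD : ∀ u ∈ D, u ∈ V ∧ 0 < dotR v u - dotR v y := fun u hu =>
    Finset.mem_filter.mp hu
  have hal2 : l2 < a := by
    have h := Finset.le_sup' f hu₀D
    have : l2 < f u₀ := by
      rw [hf_def]
      exact (lt_div_iff₀ hu₀v).mpr (by linarith)
    rw [← ha_def] at h
    linarith
  have hal1 : a ≤ l1 := by
    rw [ha_def, Finset.sup'_le_iff]
    intro u huD
    obtain ⟨huV, huv⟩ := hmemD u huD
    rw [hf_def]
    exact (div_le_iff₀ huv).mpr (h1 u huV)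
  have hmaxa : ∀ u ∈ V, dotR c u - dotR c y ≤ a * (dotR v u - dotR v y) := by
    intro u huV
    rcases lt_trichotomy (dotR v u - dotR v y) 0 with hv | hv | hv
    · have := h1 u huV
      nlinarith
    · rw [hv, mul_zero]
      have := h1 u huV
      rw [hv, mul_zero] at this
      exact this
    · have huD : u ∈ D := Finset.mem_filter.mpr ⟨huV, hv⟩
      have h := Finset.le_sup' f huD
      rw [← ha_def, hf_def] at h
      exact (div_le_iff₀ hv).mp h
  set hvec := c - a • v with hhv_def
  have hdot : ∀ p, dotR hvec p = dotR c p - a * dotR v p := fun p =>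
    dotR_sub_smul_left c v p a
  have hmax : ∀ u ∈ V, dotR hvec u ≤ dotR hvec y := by
    intro u huV
    rw [hdot, hdot]
    have := hmaxa u huV
    nlinarith [hmaxa u huV]
  obtain ⟨u₁, hu₁D, hu₁f⟩ := Finset.exists_mem_eq_sup' hD f
  obtain ⟨hu₁V, hu₁v⟩ := hmemD u₁ hu₁D
  rw [← ha_def] at hu₁f
  have hstar : dotR hvec u₁ = dotR hvec y := by
    rw [hdot, hdot]
    have : a * (dotR v u₁ - dotR v y) = dotR c u₁ - dotR c y := by
      rw [hu₁f]
      simp only [hf_def]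
      exact div_mul_cancel₀ _ hu₁v.ne'
    linarith
  set W := V.filter (fun u => dotR hvec u = dotR hvec y) with hW_def
  have hyW : y ∈ W := Finset.mem_filter.mpr
    ⟨by exact_mod_cast extremePoints_convexHull_subset hy, rfl⟩
  have hface := face_eq hmax
  rw [← hW_def] at hface
  have hWhull : convexHull ℝ (W : Set (Fin n → ℝ)) ⊆ convexHull ℝ (V : Set (Fin n → ℝ)) :=
    convexHull_mono (by exact_mod_cast Finset.filter_subset _ _)
  have hyW' : y ∈ (convexHull ℝ (W : Set (Fin n → ℝ))).extremePoints ℝ :=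
    extremePoints_anti hWhull hy (subset_convexHull ℝ _ (by exact_mod_cast hyW))
  have hu₁W : u₁ ∈ W := Finset.mem_filter.mpr ⟨hu₁V, hstar⟩
  obtain ⟨u, himp⟩ := lemA (w := v) hyW'
    ⟨u₁, subset_convexHull ℝ _ (by exact_mod_cast hu₁W),
      show dotR v y < dotR v u₁ by linarith⟩
  have hext : IsExtreme ℝ (convexHull ℝ (V : Set (Fin n → ℝ)))
      (convexHull ℝ (W : Set (Fin n → ℝ))) := by
    have := face_isExtreme hmax
    rwa [hface] at this
  have himpV : ImpNbr (convexHull ℝ (V : Set (Fin n → ℝ))) v y u :=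
    ⟨adjacent_lift hext himp.1, himp.2⟩
  have huW : u ∈ W := by
    exact_mod_cast extremePoints_convexHull_subset himp.1.2.1
  have huM : dotR hvec u = dotR hvec y := (Finset.mem_filter.mp huW).2
  have huv : 0 < dotR v u - dotR v y := sub_pos.mpr himp.2
  have hslope : dotR c u - dotR c y = a * (dotR v u - dotR v y) := by
    rw [hdot, hdot] at huM
    linarith
  have := h2 u himpV
  nlinarith

/-- Corollary 3.3: the length of a Shadow-rule path starting at a `c`-maximum of the
`v`-minimal face is at most `|{⟨v,u⟩ : u vertex of Q}| − 1`, and the path contains a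
`c`-maximum of `Q`. -/
theorem shadow_path_length_bound {n : ℕ} (Q : Set (Fin n → ℝ)) (hQ : IsPolytope Q)
    (c v : Fin n → ℝ) (hv : v ≠ 0) (k : ℕ) (x : ℕ → Fin n → ℝ)
    (hpath : ShadowPath Q c v k x)
    (hmin : ∀ z ∈ Q, dotR v (x 0) ≤ dotR v z)
    (hmaxF : ∀ y ∈ Q, (∀ z ∈ Q, dotR v y ≤ dotR v z) → dotR c y ≤ dotR c (x 0)) :
    k + 1 ≤ ((fun u => dotR v u) '' (Q.extremePoints ℝ)).ncard ∧
      ∃ i ≤ k, ∀ y ∈ Q, dotR c y ≤ dotR c (x i) := by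
  obtain ⟨V, hVne, rfl⟩ := hQ
  obtain ⟨hvert, hstep, hlast⟩ := hpath
  have hmono : ∀ i, i < k → dotR v (x i) < dotR v (x (i+1)) :=
    fun i hi => ((hstep i hi).1).2
  have hchain : ∀ j ≤ k, ∀ i < j, dotR v (x i) < dotR v (x j) := by
    intro j
    induction j with
    | zero => intro _ i hi; omega
    | succ m ihm =>
      intro hjk i hi
      have hmk : m < k := by omega
      rcases Nat.lt_succ_iff_lt_or_eq.mp hi with h | h
      · exact lt_trans (ihm (by omega) i h) (hmono m hmk)
      · rw [h]; exact hmono m hmk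
  constructor
  · -- counting bound
    set S := (fun u => dotR v u) '' ((convexHull ℝ (V : Set (Fin n → ℝ))).extremePoints ℝ)
      with hS_def
    have hSfin : S.Finite := by
      apply Set.Finite.image
      exact Set.Finite.subset V.finite_toSet extremePoints_convexHull_subset
    set T := (Finset.range (k+1)).image (fun i => dotR v (x i)) with hT_def
    have hTcard : T.card = k + 1 := by
      rw [hT_def, Finset.card_image_of_injOn, Finset.card_range]
      intro i hi j hj hij
      simp only [Finset.coe_range, Set.mem_Iio] at hi hj
      by_contra hne
      rcases lt_or_gt_of_ne hne with h | h
      · exact absurd hij (ne_of_lt (hchain j (by omega) i h))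
      · exact absurd hij.symm (ne_of_lt (hchain i (by omega) j h))
    have hsub : T ⊆ hSfin.toFinset := by
      intro r hr
      rw [hT_def, Finset.mem_image] at hr
      obtain ⟨i, hi, rfl⟩ := hr
      rw [Finset.mem_range] at hi
      rw [Set.Finite.mem_toFinset]
      exact ⟨x i, hvert i (by omega), rfl⟩
    have := Finset.card_le_card hsub
    rw [hTcard] at this
    rw [Set.ncard_eq_toFinset_card S hSfin]
    exact this
  · -- existence of a c-maximal vertex on the path
    set Mx : ℕ → ℝ → Prop := fun i l => ∀ u ∈ V,
      dotR c u - dotR c (x i) ≤ l * (dotR v u - dotR v (x i)) with hMx_def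
    have base : ∃ l, 0 ≤ l ∧ Mx 0 l := by
      set D₀ := V.filter (fun u => 0 < dotR v u - dotR v (x 0)) with hD₀_def
      set f₀ : (Fin n → ℝ) → ℝ :=
        fun u => (dotR c u - dotR c (x 0)) / (dotR v u - dotR v (x 0)) with hf₀_def
      have key : ∀ l : ℝ, 0 ≤ l → (∀ u ∈ D₀, f₀ u ≤ l) → Mx 0 l := by
        intro l hl0 hup u huV
        have huQ : u ∈ convexHull ℝ (V : Set (Fin n → ℝ)) :=
          subset_convexHull ℝ _ (by exact_mod_cast huV)
        have ht0 : 0 ≤ dotR v u - dotR v (x 0) := sub_nonneg.mpr (hmin u huQ)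
        rcases eq_or_lt_of_le ht0 with heq | hpos
        · have hvu : dotR v u = dotR v (x 0) := by linarith
          have := hmaxF u huQ (fun z hz => by rw [hvu]; exact hmin z hz)
          rw [← heq, mul_zero]
          linarith
        · have huD : u ∈ D₀ := Finset.mem_filter.mpr ⟨huV, hpos⟩
          have := hup u huD
          rw [hf₀_def] at this
          exact (div_le_iff₀ hpos).mp this
      by_cases hD₀ : D₀.Nonempty
      · refine ⟨max 0 (D₀.sup' hD₀ f₀), le_max_left _ _, key _ (le_max_left _ _) ?_⟩
        intro u huD
        exact le_trans (Finset.le_sup' f₀ huD) (le_max_right _ _)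
      · refine ⟨0, le_rfl, key 0 le_rfl ?_⟩
        intro u huD
        exact absurd ⟨u, huD⟩ hD₀
    have main : ∀ i ≤ k, (∃ j ≤ k, Mx j 0) ∨ (∃ l, 0 ≤ l ∧ Mx i l) := by
      intro i
      induction i with
      | zero => intro _; exact Or.inr base
      | succ m ihm =>
        intro hm1k
        have hmk : m < k := by omega
        rcases ihm (by omega) with hdone | ⟨l, hl0, hMl⟩
        · exact Or.inl hdone
        · have hyv : x m ∈ (convexHull ℝ (V : Set (Fin n → ℝ))).extremePoints ℝ :=
            hvert m (by omega)
          set σ := (dotR c (x (m+1)) - dotR c (x m)) /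
            (dotR v (x (m+1)) - dotR v (x m)) with hσ_def
          have hΔv : 0 < dotR v (x (m+1)) - dotR v (x m) := sub_pos.mpr (hmono m hmk)
          have hnbr : ∀ u, ImpNbr (convexHull ℝ (V : Set (Fin n → ℝ))) v (x m) u →
              dotR c u - dotR c (x m) ≤ σ * (dotR v u - dotR v (x m)) := by
            intro u himp
            have h := (hstep m hmk).2 u himp
            rw [dotR_sub_right, dotR_sub_right, dotR_sub_right, dotR_sub_right] at h
            rw [← hσ_def] at h
            have hu : 0 < dotR v u - dotR v (x m) := sub_pos.mpr himp.2
            exact (div_le_iff₀ hu).mp h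
          have hexact : dotR c (x (m+1)) - dotR c (x m)
              = σ * (dotR v (x (m+1)) - dotR v (x m)) := by
            rw [hσ_def]
            exact (div_mul_cancel₀ _ hΔv.ne').symm
          have hvm1 : x (m+1) ∈ V := by
            exact_mod_cast extremePoints_convexHull_subset (hvert (m+1) (by omega))
          have hσl : σ ≤ l := by
            have := hMl (x (m+1)) hvm1
            rw [hσ_def]
            exact (div_le_iff₀ hΔv).mpr this
          by_cases hσ0 : 0 ≤ σ
          · have hMmσ : Mx m σ := lemC hyv hσl hMl hnbr
            refine Or.inr ⟨σ, hσ0, ?_⟩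
            intro u huV
            have h1 := hMmσ u huV
            nlinarith [hMmσ u huV, hexact]
          · push_neg at hσ0
            have hM0 : Mx m 0 := by
              apply lemC hyv hl0 hMl
              intro u himp
              have h1 := hnbr u himp
              have hu : 0 < dotR v u - dotR v (x m) := sub_pos.mpr himp.2
              nlinarith
            exact Or.inl ⟨m, by omega, hM0⟩
    have hfin : ∃ j ≤ k, Mx j 0 := by
      rcases main k le_rfl with hdone | ⟨l, hl0, hMl⟩
      · exact hdone
      · refine ⟨k, le_rfl, ?_⟩
        apply lemC (hvert k le_rfl) hl0 hMl
        intro u himp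
        exact absurd himp (hlast u)
    obtain ⟨j, hjk, hMj⟩ := hfin
    refine ⟨j, hjk, ?_⟩
    intro y hy
    have := hull_le (V := V) (w := c) (M := dotR c (x j))
      (fun u huV => by have := hMj u huV; linarith) y hy
    exact this
end
end

section
/- Let P ⊆ ℝ^n be a 0/1 polytope, let x^0 be a vertex of P, let c ∈ ℝ^n, and set v = 1 − 2x^0 (that is, v(i) = 1 if x^0(i) = 0 and v(i) = −1 if x^0(i) = 1). Then x^0 is the unique minimizer of ⟨v,·⟩ over P, and every Shadow-rule path on P with auxiliary vector v and objective c starting at x^0 has length at most n and contains a vertex maximizing ⟨c,·⟩ over P. -/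
open Finset

attribute [local instance] Classical.propDecidable

noncomputable section

variable {n : ℕ}

lemma dotR_isLinear (w : Fin n → ℝ) : IsLinearMap ℝ (dotR w) := by
  constructor
  · intro a b
    simp [dotR, Pi.add_apply, mul_add, Finset.sum_add_distrib]
  · intro t a
    simp [dotR, Finset.mul_sum, mul_comm, mul_left_comm]

lemma dotR_add (w a b : Fin n → ℝ) : dotR w (a + b) = dotR w a + dotR w b :=
  (dotR_isLinear w).map_add a b

lemma dotR_smul (w : Fin n → ℝ) (t : ℝ) (a : Fin n → ℝ) : dotR w (t • a) = t * dotR w a :=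
  (dotR_isLinear w).map_smul t a

lemma dotR_sub (w a b : Fin n → ℝ) : dotR w (a - b) = dotR w a - dotR w b := by
  have := dotR_add w (a - b) b; simp at this; linarith


lemma dotR_sum_s2 (w : Fin n → ℝ) (V : Finset (Fin n → ℝ)) (f : (Fin n → ℝ) → ℝ) :
    dotR w (∑ p ∈ V, f p • p) = ∑ p ∈ V, f p * dotR w p := by
  classical
  induction V using Finset.induction with
  | empty => simp [dotR]
  | @insert a s h ih => rw [Finset.sum_insert h, dotR_add, dotR_smul, Finset.sum_insert h, ih]

lemma continuous_dotR (w : Fin n → ℝ) : Continuous (dotR w) := by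
  unfold dotR
  exact continuous_finset_sum _ fun i _ => continuous_const.mul (continuous_apply i)

lemma rep_of_mem_hull {V : Finset (Fin n → ℝ)} {y : Fin n → ℝ}
    (hy : y ∈ convexHull ℝ (V : Set (Fin n → ℝ))) :
    ∃ lam : (Fin n → ℝ) → ℝ, (∀ p ∈ V, 0 ≤ lam p) ∧ ∑ p ∈ V, lam p = 1 ∧
      ∑ p ∈ V, lam p • p = y := by
  rw [Finset.convexHull_eq] at hy
  obtain ⟨lam, h0, h1, h2⟩ := hy
  exact ⟨lam, h0, h1, by rw [← h2, Finset.centerMass_eq_of_sum_1 _ _ h1]; rfl⟩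

lemma le_on_hull {V : Finset (Fin n → ℝ)} {φ : (Fin n → ℝ) → ℝ} (hφ : IsLinearMap ℝ φ) {M : ℝ}
    (h : ∀ p ∈ V, φ p ≤ M) :
    ∀ y ∈ convexHull ℝ (V : Set (Fin n → ℝ)), φ y ≤ M := by
  intro y hy
  have : (V : Set (Fin n → ℝ)) ⊆ {z | φ z ≤ M} := fun p hp => h p hp
  exact convexHull_min this (convex_halfSpace_le hφ M) hy

set_option maxHeartbeats 2000000 in
/-- Main polytope lemma: a vertex which is not optimal for a linear objective has an
improving neighbor. -/
lemma improving_neighbor {V : Finset (Fin n → ℝ)} {P : Set (Fin n → ℝ)}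
    (hPV : P = convexHull ℝ (V : Set (Fin n → ℝ)))
    {x : Fin n → ℝ} (hx : IsVertex P x) {w y : Fin n → ℝ}
    (hy : y ∈ P) (hwy : dotR w x < dotR w y) :
    ∃ u, Adjacent P x u ∧ dotR w x < dotR w u := by
  classical
  have hPconv : Convex ℝ P := hPV ▸ convex_convexHull ℝ _
  have hPcomp : IsCompact P := hPV ▸ V.finite_toSet.isCompact_convexHull ℝ
  have hVP : (V : Set (Fin n → ℝ)) ⊆ P := hPV ▸ subset_convexHull ℝ _
  have hxP : x ∈ P := hx.1
  have hxV : x ∈ V := by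
    have h := hx; rw [IsVertex, hPV] at h; exact extremePoints_convexHull_subset h
  have hyx : y ≠ x := fun h => absurd hwy (by rw [h]; exact lt_irrefl _)
  -- x is not in the hull of the other points
  have hW : x ∉ convexHull ℝ ((V.erase x : Finset (Fin n → ℝ)) : Set (Fin n → ℝ)) := by
    intro hmem
    have hsub : convexHull ℝ ((V.erase x : Finset (Fin n → ℝ)) : Set (Fin n → ℝ)) ⊆ P := by
      rw [hPV]
      exact convexHull_mono (by exact_mod_cast Finset.erase_subset x V)
    have hxe : x ∈ (convexHull ℝ ((V.erase x : Finset (Fin n → ℝ)) : Set (Fin n → ℝ))).extremePoints ℝ := by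
      rw [mem_extremePoints]
      exact ⟨hmem, fun a ha b hb hseg => (mem_extremePoints.mp hx).2 _ (hsub ha) _ (hsub hb) hseg⟩
    exact Finset.notMem_erase x V (by exact_mod_cast extremePoints_convexHull_subset hxe)
  -- separating functional
  obtain ⟨f, u0, hfx, hfb⟩ := geometric_hahn_banach_point_closed
    (convex_convexHull ℝ _) ((V.erase x).finite_toSet.isCompact_convexHull ℝ).isClosed hW
  set δ : ℝ := u0 - f x with hδdef
  have hδpos : 0 < δ := sub_pos.mpr hfx
  set G : (Fin n → ℝ) →ₗ[ℝ] ℝ := δ⁻¹ • (f : (Fin n → ℝ) →ₗ[ℝ] ℝ) with hGdef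
  set β : (Fin n → ℝ) → ℝ := fun z => G z - G x with hβdef
  have hGL : IsLinearMap ℝ (fun z : Fin n → ℝ => G z) := G.isLinear
  have hβ1 : ∀ p ∈ V.erase x, 1 ≤ β p := by
    intro p hp
    have h1 : u0 < f p := hfb p (subset_convexHull ℝ _ (by exact_mod_cast hp))
    have : β p = (f p - f x) / δ := by
      simp [hβdef, hGdef, div_eq_inv_mul, mul_sub]
    rw [this, le_div_iff₀ hδpos]
    simp [hδdef]; linarith
  have hβx : β x = 0 := by simp [hβdef]
  -- the vertex figure (radial projection)
  set S : Set (Fin n → ℝ) :=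
    (fun p => x + (β p)⁻¹ • (p - x)) '' ((V.erase x : Finset (Fin n → ℝ)) : Set (Fin n → ℝ))
    with hSdef
  set Q : Set (Fin n → ℝ) := convexHull ℝ S with hQdef
  -- radial projection lemma
  have hrad : ∀ z ∈ P, z ≠ x → 0 < β z ∧ x + (β z)⁻¹ • (z - x) ∈ Q := by
    intro z hzP hzx
    rw [hPV] at hzP
    obtain ⟨lam, hl0, hl1, hl2⟩ := rep_of_mem_hull hzP
    have hzx' : z - x = ∑ p ∈ V.erase x, lam p • (p - x) := by
      have e1 : ∑ p ∈ V, lam p • (p - x) = z - x := by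
        have : ∑ p ∈ V, lam p • (p - x) = (∑ p ∈ V, lam p • p) - (∑ p ∈ V, lam p) • x := by
          rw [Finset.sum_smul, ← Finset.sum_sub_distrib]
          exact Finset.sum_congr rfl fun p _ => smul_sub _ _ _
        rw [this, hl1, hl2, one_smul]
      rw [← e1]
      exact (Finset.sum_erase V (by simp)).symm
    have hβz : β z = ∑ p ∈ V.erase x, lam p * β p := by
      have : β z = G (z - x) := by simp [hβdef, map_sub]
      rw [this, hzx', map_sum]
      refine Finset.sum_congr rfl fun p _ => ?_
      simp [hβdef, map_smul, map_sub, smul_eq_mul, mul_sub]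
    have hterms : ∀ p ∈ V.erase x, 0 ≤ lam p * β p := fun p hp =>
      mul_nonneg (hl0 p (Finset.erase_subset _ _ hp)) (le_trans zero_le_one (hβ1 p hp))
    have hβznn : 0 ≤ β z := hβz ▸ Finset.sum_nonneg hterms
    have hβzpos : 0 < β z := by
      rcases hβznn.lt_or_eq with h | h
      · exact h
      exfalso
      have hzero := (Finset.sum_eq_zero_iff_of_nonneg hterms).mp (hβz ▸ h.symm)
      have hlam0 : ∀ p ∈ V.erase x, lam p = 0 := by
        intro p hp
        have := hzero p hp
        have hβp : β p ≠ 0 := by have := hβ1 p hp; linarith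
        rcases mul_eq_zero.mp this with h' | h'
        · exact h'
        · exact absurd h' hβp
      have : z - x = 0 := by
        rw [hzx']
        exact Finset.sum_eq_zero fun p hp => by rw [hlam0 p hp, zero_smul]
      exact hzx (sub_eq_zero.mp this)
    refine ⟨hβzpos, ?_⟩
    set μ : (Fin n → ℝ) → ℝ := fun p => lam p * β p / β z with hμdef
    have hμ0 : ∀ p ∈ V.erase x, 0 ≤ μ p := fun p hp =>
      div_nonneg (hterms p hp) hβznn
    have hμ1 : ∑ p ∈ V.erase x, μ p = 1 := by
      rw [hμdef]
      rw [← Finset.sum_div, ← hβz, div_self (ne_of_gt hβzpos)]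
    have hkey : x + (β z)⁻¹ • (z - x)
        = ∑ p ∈ V.erase x, μ p • (x + (β p)⁻¹ • (p - x)) := by
      have : ∀ p ∈ V.erase x,
          μ p • (x + (β p)⁻¹ • (p - x)) = μ p • x + ((β z)⁻¹ * lam p) • (p - x) := by
        intro p hp
        have hβp : β p ≠ 0 := by have := hβ1 p hp; linarith
        rw [smul_add, smul_smul]
        congr 2
        simp only [hμdef]
        field_simp
      rw [Finset.sum_congr rfl this, Finset.sum_add_distrib, ← Finset.sum_smul, hμ1, one_smul]
      congr 1
      rw [hzx', Finset.smul_sum]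
      exact Finset.sum_congr rfl fun p _ => smul_smul _ _ _
    rw [hkey, hQdef]
    have hsum1 : 0 < ∑ p ∈ V.erase x, μ p := by rw [hμ1]; norm_num
    have := Finset.centerMass_mem_convexHull (V.erase x) hμ0 hsum1
      (z := fun p => x + (β p)⁻¹ • (p - x)) (s := S)
      (fun p hp => Set.mem_image_of_mem _ (by exact_mod_cast hp))
    rwa [Finset.centerMass_eq_of_sum_1 _ _ hμ1] at this
  -- Q sits inside P
  have hSP : S ⊆ P := by
    rintro _ ⟨p, hp, rfl⟩
    have hpV : p ∈ V.erase x := by exact_mod_cast hp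
    have hβp : 1 ≤ β p := hβ1 p hpV
    have h0 : (0:ℝ) ≤ (β p)⁻¹ := inv_nonneg.mpr (by linarith)
    have h1 : (β p)⁻¹ ≤ 1 := by
      rw [inv_le_one_iff₀]; right; exact hβp
    show x + (β p)⁻¹ • (p - x) ∈ P
    have heq : x + (β p)⁻¹ • (p - x) = (1 - (β p)⁻¹) • x + (β p)⁻¹ • p := by module
    rw [heq]
    exact hPconv hxP (hVP (Finset.erase_subset _ _ hpV)) (by linarith) h0 (by ring)
  have hQP : Q ⊆ P := convexHull_min hSP hPconv
  -- maximize w over Q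
  have hQcomp : IsCompact Q := (((V.erase x).finite_toSet.image _).isCompact_convexHull ℝ)
  obtain ⟨hβy, hpyQ⟩ := hrad y hy hyx
  have hQne : Q.Nonempty := ⟨_, hpyQ⟩
  obtain ⟨z0, hz0Q, hz0max'⟩ := hQcomp.exists_isMaxOn hQne (continuous_dotR w).continuousOn
  have hz0max : ∀ z ∈ Q, dotR w z ≤ dotR w z0 := fun z hz => hz0max' hz
  set M : ℝ := dotR w z0 with hMdef
  set Mq : Set (Fin n → ℝ) := Q ∩ {z | dotR w z = M} with hMqdef
  have hMqcomp : IsCompact Mq :=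
    hQcomp.inter_right (isClosed_singleton.preimage (continuous_dotR w))
  have hMqne : Mq.Nonempty := ⟨z0, hz0Q, rfl⟩
  have hMqext : IsExtreme ℝ Q Mq := by
    constructor
    · exact Set.inter_subset_left
    rintro a ha b hb z ⟨hzQ, hzM⟩ ⟨s, t, hs, ht, hst, hsum⟩
    have hwa := hz0max a ha
    have hwb := hz0max b hb
    have hcomb : s * dotR w a + t * dotR w b = M := by
      rw [← hzM, ← hsum, dotR_add, dotR_smul, dotR_smul]
    have h3 : s * M + t * M = M := by rw [← add_mul, hst, one_mul]
    have hA : dotR w a = M := by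
      by_contra h
      have h1 : s * dotR w a < s * M := mul_lt_mul_of_pos_left (lt_of_le_of_ne hwa h) hs
      have h2 : t * dotR w b ≤ t * M := mul_le_mul_of_nonneg_left hwb ht.le
      linarith
    have hB : dotR w b = M := by
      by_contra h
      have h1 : t * dotR w b < t * M := mul_lt_mul_of_pos_left (lt_of_le_of_ne hwb h) ht
      have h2 : s * dotR w a ≤ s * M := mul_le_mul_of_nonneg_left hwa hs.le
      linarith
    exact ⟨ha, hA⟩
  obtain ⟨q, hqMq⟩ := hMqcomp.extremePoints_nonempty hMqne
  have hqQex : q ∈ Q.extremePoints ℝ := hMqext.extremePoints_subset_extremePoints hqMq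
  have hqS : q ∈ S := by
    rw [hQdef] at hqQex
    exact extremePoints_convexHull_subset hqQex
  obtain ⟨u, huW', hqu⟩ := hqS
  have huW : u ∈ V.erase x := by exact_mod_cast huW'
  have hqM : dotR w q = M := hqMq.1.2
  -- the maximum over Q beats x
  have hwq : dotR w x < dotR w q := by
    have h1 : dotR w (x + (β y)⁻¹ • (y - x)) = dotR w x + (β y)⁻¹ * (dotR w y - dotR w x) := by
      rw [dotR_add, dotR_smul, dotR_sub]
    have h2 : dotR w x < dotR w (x + (β y)⁻¹ • (y - x)) := by
      rw [h1]
      have : 0 < (β y)⁻¹ * (dotR w y - dotR w x) :=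
        mul_pos (inv_pos.mpr hβy) (by linarith)
      linarith
    calc dotR w x < dotR w (x + (β y)⁻¹ • (y - x)) := h2
      _ ≤ M := hz0max _ hpyQ
      _ = dotR w q := hqM.symm
  -- the ray through u
  set d : Fin n → ℝ := u - x with hddef
  have hune : u ≠ x := (Finset.mem_erase.mp huW).1
  have hd0 : d ≠ 0 := sub_ne_zero.mpr hune
  have hβu : 1 ≤ β u := hβ1 u huW
  have hβune : β u ≠ 0 := by linarith
  have hqform : q = x + (β u)⁻¹ • d := by rw [← hqu]
  have hwd : 0 < dotR w d := by
    have h1 : dotR w q = dotR w x + (β u)⁻¹ * dotR w d := by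
      rw [hqform, dotR_add, dotR_smul]
    have h2 : 0 < (β u)⁻¹ * dotR w d := by linarith
    have h3 : 0 < (β u)⁻¹ := inv_pos.mpr (by linarith)
    by_contra hcon
    push_neg at hcon
    nlinarith
  set T : Set ℝ := {t : ℝ | 0 ≤ t ∧ x + t • d ∈ P} with hTdef
  have h0T : (0:ℝ) ∈ T := ⟨le_refl 0, by simpa using hxP⟩
  have h1T : (1:ℝ) ∈ T := ⟨zero_le_one, by
    have : x + (1:ℝ) • d = u := by rw [one_smul, hddef]; abel
    rw [this]; exact hVP (Finset.erase_subset _ _ huW)⟩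
  have hβray : ∀ t : ℝ, β (x + t • d) = t * β u := by
    intro t
    have : β (x + t • d) = G (t • d) := by simp [hβdef, map_add]
    rw [this, map_smul, smul_eq_mul, hddef]
    simp [hβdef, map_sub]
  have hGbound : ∃ MG : ℝ, ∀ z ∈ P, G z ≤ MG := by
    refine ⟨V.sup' ⟨x, hxV⟩ (fun p => G p), ?_⟩
    intro z hz
    rw [hPV] at hz
    exact le_on_hull G.isLinear (fun p hp => Finset.le_sup' (fun p => G p) hp) z hz
  obtain ⟨MG, hMG⟩ := hGbound
  have hTbdd : BddAbove T := by
    refine ⟨(MG - G x) / β u, ?_⟩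
    rintro t ⟨ht0, htP⟩
    rw [le_div_iff₀ (by linarith : (0:ℝ) < β u)]
    have h1 : G (x + t • d) ≤ MG := hMG _ htP
    have h2 : G (x + t • d) - G x = t * β u := hβray t
    linarith
  have hTclosed : IsClosed T := by
    have : T = Set.Ici (0:ℝ) ∩ (fun t : ℝ => x + t • d) ⁻¹' P := by
      ext t; simp [hTdef, Set.mem_Ici, and_comm]
    rw [this]
    exact isClosed_Ici.inter (hPcomp.isClosed.preimage
      (continuous_const.add (continuous_id.smul continuous_const)))
  set tmax : ℝ := sSup T with htmaxdef
  have htmaxT : tmax ∈ T := hTclosed.csSup_mem ⟨0, h0T⟩ hTbdd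
  have htmax1 : 1 ≤ tmax := le_csSup hTbdd h1T
  set m : Fin n → ℝ := x + tmax • d with hmdef
  have hmP : m ∈ P := htmaxT.2
  set Fc : Set (Fin n → ℝ) := {z ∈ P | ∃ t : ℝ, 0 ≤ t ∧ z = x + t • d} with hFcdef
  have hxFc : x ∈ Fc := ⟨hxP, 0, le_refl 0, by simp⟩
  have hmFc : m ∈ Fc := ⟨hmP, tmax, by linarith, rfl⟩
  -- Fc is a face of P
  have hext : IsExtreme ℝ P Fc := by
    refine ⟨fun z hz => hz.1, fun a haP b hbP z hz hseg => (?_ : a ∈ Fc ∧ b ∈ Fc).1⟩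
    obtain ⟨hzP, r, hr0, rfl⟩ := hz
    obtain ⟨s, t, hs, ht, hst, hsum⟩ := hseg
    rcases hr0.lt_or_eq with hr | hr
    · -- r > 0
      by_cases hax : a = x
      · refine ⟨hax ▸ hxFc, hbP, r / t, div_nonneg hr.le ht.le, ?_⟩
        have E1 : t • b = t • x + r • d := by
          rw [hax, show s = 1 - t from by linarith] at hsum
          linear_combination (norm := module) hsum
        have E2 : t • (x + (r / t) • d) = t • x + r • d := by
          rw [smul_add, smul_smul]
          have : t * (r / t) = r := by field_simp
          rw [this]
        exact smul_right_injective _ (ne_of_gt ht) (E1.trans E2.symm)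
      · by_cases hbx : b = x
        · refine ⟨⟨haP, r / s, div_nonneg hr.le hs.le, ?_⟩, hbx ▸ hxFc⟩
          have E1 : s • a = s • x + r • d := by
            rw [hbx, show t = 1 - s from by linarith] at hsum
            linear_combination (norm := module) hsum
          have E2 : s • (x + (r / s) • d) = s • x + r • d := by
            rw [smul_add, smul_smul]
            have : s * (r / s) = r := by field_simp
            rw [this]
          exact smul_right_injective _ (ne_of_gt hs) (E1.trans E2.symm)
        · obtain ⟨hβa, hpaQ⟩ := hrad a haP hax
          obtain ⟨hβb, hpbQ⟩ := hrad b hbP hbx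
          set pa : Fin n → ℝ := x + (β a)⁻¹ • (a - x) with hpadef
          set pb : Fin n → ℝ := x + (β b)⁻¹ • (b - x) with hpbdef
          have hβz : β (x + r • d) = r * β u := hβray r
          have hβzpos : 0 < β (x + r • d) := by rw [hβz]; positivity
          have hβzeq : β (x + r • d) = s * β a + t * β b := by
            rw [← hsum]
            simp only [hβdef, map_add, map_smul, smul_eq_mul]
            have : s * G a + t * G b - G x = s * (G a - G x) + t * (G b - G x) := by
              have : s * G x + t * G x = G x := by rw [← add_mul, hst, one_mul]
              linarith
            linarith
          set βz : ℝ := β (x + r • d) with hβzdef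
          have hβzne : βz ≠ 0 := ne_of_gt hβzpos
          have hsumd : s • (a - x) + t • (b - x) = r • d := by
            have e : s • (a - x) + t • (b - x) = (s • a + t • b) - (s + t) • x := by module
            rw [e, hsum, hst, one_smul]; abel
          have hqseg : q ∈ openSegment ℝ pa pb := by
            refine ⟨s * β a / βz, t * β b / βz, by positivity, by positivity, ?_, ?_⟩
            · rw [← add_div, ← hβzeq]; exact div_self hβzne
            · have e1 : (s * β a / βz) • pa + (t * β b / βz) • pb
                  = (s * β a / βz + t * β b / βz) • x + (βz⁻¹ * s) • (a - x)
                    + (βz⁻¹ * t) • (b - x) := by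
                rw [hpadef, hpbdef, smul_add, smul_add, smul_smul, smul_smul]
                have c1 : s * β a / βz * (β a)⁻¹ = βz⁻¹ * s := by
                  field_simp
                have c2 : t * β b / βz * (β b)⁻¹ = βz⁻¹ * t := by
                  field_simp
                rw [c1, c2]; module
              have e2 : (s * β a / βz + t * β b / βz) = 1 := by
                rw [← add_div, ← hβzeq]; exact div_self hβzne
              rw [e1, e2, one_smul]
              have e3 : (βz⁻¹ * s) • (a - x) + (βz⁻¹ * t) • (b - x)
                  = βz⁻¹ • (s • (a - x) + t • (b - x)) := by
                rw [smul_add, smul_smul, smul_smul]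
              have c4 : βz⁻¹ * r = (β u)⁻¹ := by
                rw [hβz]
                field_simp
              have e4 : βz⁻¹ • (r • d) = (β u)⁻¹ • d := by
                rw [smul_smul, c4]
              rw [add_assoc, e3, hsumd, e4, hqform]
          obtain ⟨hpaq, hpbq⟩ := (mem_extremePoints.mp hqQex).2 _ hpaQ _ hpbQ hqseg
          have haFc : a ∈ Fc := by
            refine ⟨haP, β a * (β u)⁻¹, by positivity, ?_⟩
            have h1 : (β a)⁻¹ • (a - x) = (β u)⁻¹ • d := by
              have := hpaq
              rw [hpadef, hqform] at this
              exact add_left_cancel this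
            have h2 : a - x = (β a * (β u)⁻¹) • d := by
              have := congrArg (fun z => (β a : ℝ) • z) h1
              simpa [smul_smul, mul_inv_cancel₀ (ne_of_gt hβa)] using this
            rw [← h2]; abel
          have hbFc : b ∈ Fc := by
            refine ⟨hbP, β b * (β u)⁻¹, by positivity, ?_⟩
            have h1 : (β b)⁻¹ • (b - x) = (β u)⁻¹ • d := by
              have := hpbq
              rw [hpbdef, hqform] at this
              exact add_left_cancel this
            have h2 : b - x = (β b * (β u)⁻¹) • d := by
              have := congrArg (fun z => (β b : ℝ) • z) h1
              simpa [smul_smul, mul_inv_cancel₀ (ne_of_gt hβb)] using this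
            rw [← h2]; abel
          exact ⟨haFc, hbFc⟩
    · -- r = 0 : the point is x itself
      have hzx : x + r • d = x := by rw [← hr, zero_smul, add_zero]
      have hxseg : x ∈ openSegment ℝ a b := ⟨s, t, hs, ht, hst, by rw [hsum, hzx]⟩
      obtain ⟨hax, hbx⟩ := (mem_extremePoints.mp hx).2 _ haP _ hbP hxseg
      exact ⟨hax ▸ hxFc, hbx ▸ hxFc⟩
  -- m is an extreme point of P
  have hmvert : m ∈ P.extremePoints ℝ := by
    refine mem_extremePoints.mpr ⟨hmP, fun a haP b hbP hseg => ?_⟩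
    obtain ⟨haFc, hbFc⟩ := And.intro (hext.2 haP hbP hmFc hseg) (hext.right_mem_of_mem_openSegment haP hbP hmFc hseg)
    obtain ⟨-, ta, hta0, hae⟩ := haFc
    obtain ⟨-, tb, htb0, hbe⟩ := hbFc
    have hta : ta ≤ tmax := le_csSup hTbdd ⟨hta0, hae ▸ haP⟩
    have htb : tb ≤ tmax := le_csSup hTbdd ⟨htb0, hbe ▸ hbP⟩
    obtain ⟨s, t, hs, ht, hst, hsum⟩ := hseg
    rw [hae, hbe, hmdef, show s = 1 - t from by linarith] at hsum
    have hco : ((1 - t) * ta + t * tb - tmax) • d = 0 := by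
      linear_combination (norm := module) hsum
    have heq : (1 - t) * ta + t * tb = tmax := by
      rcases smul_eq_zero.mp hco with h | h
      · linarith
      · exact absurd h hd0
    have hta' : ta = tmax := by
      by_contra hne
      have hlt : ta < tmax := lt_of_le_of_ne hta hne
      have h1 : (1 - t) * ta < (1 - t) * tmax :=
        mul_lt_mul_of_pos_left hlt (by linarith)
      have h2 : t * tb ≤ t * tmax := mul_le_mul_of_nonneg_left htb ht.le
      nlinarith
    have htb' : tb = tmax := by
      by_contra hne
      have hlt : tb < tmax := lt_of_le_of_ne htb hne
      have h1 : t * tb < t * tmax := mul_lt_mul_of_pos_left hlt ht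
      have h2 : (1 - t) * ta ≤ (1 - t) * tmax :=
        mul_le_mul_of_nonneg_left hta (by linarith)
      nlinarith
    constructor
    · rw [hae, hta']
    · rw [hbe, htb']
  have hmx : x ≠ m := by
    intro h
    have h1 : tmax • d = 0 := by
      have h2 := h
      rw [hmdef] at h2
      linear_combination (norm := module) h2.symm
    rcases smul_eq_zero.mp h1 with h' | h'
    · linarith
    · exact hd0 h'
  have hFcseg : Fc = segment ℝ x m := by
    ext z
    constructor
    · rintro ⟨hzP, t, ht0, rfl⟩
      have htle : t ≤ tmax := le_csSup hTbdd ⟨ht0, hzP⟩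
      rw [segment_eq_image']
      refine ⟨t / tmax, ⟨div_nonneg ht0 (by linarith), (div_le_one (by linarith)).mpr htle⟩, ?_⟩
      show x + (t / tmax) • (m - x) = x + t • d
      rw [hmdef, show x + tmax • d - x = tmax • d from by abel, smul_smul,
        div_mul_cancel₀ _ (by linarith : tmax ≠ 0)]
    · intro hz
      refine ⟨hPconv.segment_subset hxP hmP hz, ?_⟩
      rw [segment_eq_image'] at hz
      obtain ⟨θ, ⟨hθ0, hθ1⟩, rfl⟩ := hz
      refine ⟨θ * tmax, mul_nonneg hθ0 (by linarith), ?_⟩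
      show x + θ • (m - x) = x + (θ * tmax) • d
      rw [hmdef, show x + tmax • d - x = tmax • d from by abel, smul_smul]
  refine ⟨m, ⟨hx, hmvert, hmx, hFcseg ▸ hext⟩, ?_⟩
  have h1 : dotR w m = dotR w x + tmax * dotR w d := by rw [hmdef, dotR_add, dotR_smul]
  have h2 : 0 < tmax * dotR w d := mul_pos (by linarith) hwd
  linarith

lemma dotR_combo_sub (a b y : Fin n → ℝ) (t : ℝ) :
    dotR (a - t • b) y = dotR a y - t * dotR b y := by
  simp [dotR, sub_mul, mul_assoc, Finset.sum_sub_distrib, Finset.mul_sum]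

lemma dotR_combo_add (a b y : Fin n → ℝ) (t : ℝ) :
    dotR (a + t • b) y = dotR a y + t * dotR b y := by
  simp [dotR, add_mul, mul_assoc, Finset.sum_add_distrib, Finset.mul_sum]

lemma vertex_mem_V {V : Finset (Fin n → ℝ)} {P : Set (Fin n → ℝ)}
    (hPV : P = convexHull ℝ (V : Set (Fin n → ℝ))) {x : Fin n → ℝ}
    (hx : IsVertex P x) : x ∈ V := by
  have h := hx; rw [IsVertex, hPV] at h; exact_mod_cast extremePoints_convexHull_subset h

/-- If a vertex is optimal for `φ` and beaten w.r.t. `w` by a point of the face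
`argmax φ`, then it has a neighbor in that face which `w`-improves it. -/
lemma improving_neighbor_in_face {V : Finset (Fin n → ℝ)} {P : Set (Fin n → ℝ)}
    (hPV : P = convexHull ℝ (V : Set (Fin n → ℝ)))
    {x : Fin n → ℝ} (hx : IsVertex P x) {φ w z : Fin n → ℝ}
    (hopt : ∀ y ∈ P, dotR φ y ≤ dotR φ x) (hz : z ∈ P) (hzφ : dotR φ z = dotR φ x)
    (hzw : dotR w x < dotR w z) :
    ∃ u, Adjacent P x u ∧ dotR φ u = dotR φ x ∧ dotR w x < dotR w u := by
  classical
  have hxV : x ∈ V := vertex_mem_V hPV hx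
  have hVne : V.Nonempty := ⟨x, hxV⟩
  set C : ℝ := max (V.sup' hVne fun p => dotR w p - dotR w x) 0 + 1 with hCdef
  have hCpos : 0 < C := by
    have : (0:ℝ) ≤ max (V.sup' hVne fun p => dotR w p - dotR w x) 0 := le_max_right _ _
    linarith
  have hCbound : ∀ p ∈ V, dotR w p - dotR w x ≤ C := by
    intro p hp
    have h1 : dotR w p - dotR w x ≤ V.sup' hVne fun p => dotR w p - dotR w x :=
      Finset.le_sup' (fun p => dotR w p - dotR w x) hp
    have h2 : V.sup' hVne (fun p => dotR w p - dotR w x)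
        ≤ max (V.sup' hVne fun p => dotR w p - dotR w x) 0 := le_max_left _ _
    linarith
  by_cases hG : ∃ p ∈ V, dotR φ p < dotR φ x
  · set G : Finset (Fin n → ℝ) := V.filter (fun p => dotR φ p < dotR φ x) with hGdef
    have hGne : G.Nonempty := by
      obtain ⟨p, hp, hp'⟩ := hG; exact ⟨p, Finset.mem_filter.mpr ⟨hp, hp'⟩⟩
    set δ : ℝ := dotR φ x - G.sup' hGne (fun p => dotR φ p) with hδdef
    have hδpos : 0 < δ := by
      obtain ⟨p0, hp0, hp0e⟩ := Finset.exists_mem_eq_sup' hGne (fun p => dotR φ p)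
      have := (Finset.mem_filter.mp hp0).2
      rw [hδdef, hp0e]; linarith
    have hδgap : ∀ p ∈ V, dotR φ p < dotR φ x → dotR φ p ≤ dotR φ x - δ := by
      intro p hp hplt
      have : dotR φ p ≤ G.sup' hGne (fun p => dotR φ p) :=
        Finset.le_sup' _ (Finset.mem_filter.mpr ⟨hp, hplt⟩)
      rw [hδdef]; linarith
    set ε : ℝ := δ / (2 * C) with hεdef
    have hεpos : 0 < ε := by positivity
    have himp : dotR (φ + ε • w) x < dotR (φ + ε • w) z := by
      rw [dotR_combo_add, dotR_combo_add, hzφ]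
      have : ε * dotR w x < ε * dotR w z := mul_lt_mul_of_pos_left hzw hεpos
      linarith
    obtain ⟨u, huadj, huimp⟩ := improving_neighbor hPV hx hz himp
    have huV : u ∈ V := vertex_mem_V hPV huadj.2.1
    have huP : u ∈ P := huadj.2.1.1
    have hφu : dotR φ u ≤ dotR φ x := hopt u huP
    rw [dotR_combo_add, dotR_combo_add] at huimp
    have hwu : dotR w x < dotR w u := by
      by_contra hcon
      push_neg at hcon
      have : ε * dotR w u ≤ ε * dotR w x := mul_le_mul_of_nonneg_left hcon hεpos.le
      linarith
    refine ⟨u, huadj, ?_, hwu⟩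
    by_contra hne
    have hlt : dotR φ u < dotR φ x := lt_of_le_of_ne hφu hne
    have h1 : dotR φ u ≤ dotR φ x - δ := hδgap u huV hlt
    have h2 : ε * (dotR w u - dotR w x) ≤ ε * C :=
      mul_le_mul_of_nonneg_left (hCbound u huV) hεpos.le
    have h3 : ε * C = δ / 2 := by rw [hεdef]; field_simp
    have h4 : dotR φ x - dotR φ u < ε * (dotR w u - dotR w x) := by
      have e : ε * (dotR w u - dotR w x) = ε * dotR w u - ε * dotR w x := by ring
      rw [e]; linarith [huimp]
    have h5 : dotR φ x - dotR φ u < δ / 2 := by rw [← h3]; exact lt_of_lt_of_le h4 h2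
    linarith [h1, h5, hδpos]
  · push_neg at hG
    obtain ⟨u, huadj, huimp⟩ := improving_neighbor hPV hx hz hzw
    have huV : u ∈ V := vertex_mem_V hPV huadj.2.1
    exact ⟨u, huadj, le_antisymm (hopt u huadj.2.1.1) (hG u huV), huimp⟩

/-- Parametric step: optimality at slope `σ` propagates down to the local slope `τ`. -/
lemma param_step {V : Finset (Fin n → ℝ)} {P : Set (Fin n → ℝ)}
    (hPV : P = convexHull ℝ (V : Set (Fin n → ℝ)))
    {x : Fin n → ℝ} (hx : IsVertex P x) {c v : Fin n → ℝ} {σ τ : ℝ} (hτσ : τ ≤ σ)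
    (hopt : ∀ y ∈ P, dotR c y - σ * dotR v y ≤ dotR c x - σ * dotR v x)
    (hloc : ∀ u, Adjacent P x u → dotR v x < dotR v u →
      dotR c u - dotR c x ≤ τ * (dotR v u - dotR v x)) :
    ∀ y ∈ P, dotR c y - τ * dotR v y ≤ dotR c x - τ * dotR v x := by
  classical
  by_contra hcon
  push_neg at hcon
  set B : Finset (Fin n → ℝ) :=
    V.filter (fun p => τ * (dotR v p - dotR v x) < dotR c p - dotR c x) with hBdef
  have hVP : (V : Set (Fin n → ℝ)) ⊆ P := hPV ▸ subset_convexHull ℝ _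
  have hBne : B.Nonempty := by
    by_contra hBe
    rw [Finset.not_nonempty_iff_eq_empty] at hBe
    obtain ⟨y0, hy0, hy0'⟩ := hcon
    have hVle : ∀ p ∈ V, dotR (c - τ • v) p ≤ dotR c x - τ * dotR v x := by
      intro p hp
      rw [dotR_combo_sub]
      have : p ∉ B := by rw [hBe]; exact Finset.notMem_empty p
      rw [hBdef, Finset.mem_filter] at this
      push_neg at this
      have := this hp
      linarith
    have := le_on_hull (by
      have := dotR_isLinear (c - τ • v)
      exact this) hVle y0 (hPV ▸ hy0)
    rw [dotR_combo_sub] at this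
    linarith
  have hBfacts : ∀ p ∈ B, 0 < dotR v p - dotR v x ∧ τ < σ := by
    intro p hpB
    obtain ⟨hpV, hpgt⟩ := Finset.mem_filter.mp hpB
    have hσp : dotR c p - dotR c x ≤ σ * (dotR v p - dotR v x) := by
      have := hopt p (hVP hpV); linarith
    have h1 : τ * (dotR v p - dotR v x) < σ * (dotR v p - dotR v x) := by linarith
    have hτσ' : τ < σ := by
      rcases lt_or_eq_of_le hτσ with h | h
      · exact h
      · exfalso; rw [h] at h1; exact lt_irrefl _ h1
    refine ⟨?_, hτσ'⟩
    by_contra hvd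
    push_neg at hvd
    nlinarith
  set sl : (Fin n → ℝ) → ℝ := fun p => (dotR c p - dotR c x) / (dotR v p - dotR v x)
    with hsldef
  set σs : ℝ := B.sup' hBne sl with hσsdef
  have hslp : ∀ p ∈ B, τ < sl p ∧ sl p ≤ σ := by
    intro p hpB
    obtain ⟨hvd, _⟩ := hBfacts p hpB
    obtain ⟨hpV, hpgt⟩ := Finset.mem_filter.mp hpB
    have hσp : dotR c p - dotR c x ≤ σ * (dotR v p - dotR v x) := by
      have := hopt p (hVP hpV); linarith
    constructor
    · rw [hsldef, lt_div_iff₀ hvd]; linarith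
    · rw [hsldef, div_le_iff₀ hvd]; linarith
  have hτσs : τ < σs := by
    obtain ⟨p, hpB⟩ := hBne
    exact lt_of_lt_of_le (hslp p hpB).1 (Finset.le_sup' _ hpB)
  have hσsσ : σs ≤ σ := by
    rw [hσsdef]
    apply Finset.sup'_le
    intro p hpB
    exact (hslp p hpB).2
  have hVopt : ∀ p ∈ V, dotR c p - dotR c x ≤ σs * (dotR v p - dotR v x) := by
    intro p hpV
    by_cases hpB : p ∈ B
    · obtain ⟨hvd, _⟩ := hBfacts p hpB
      have : sl p ≤ σs := Finset.le_sup' _ hpB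
      rw [hsldef, div_le_iff₀ hvd] at this
      linarith
    · rw [hBdef, Finset.mem_filter] at hpB
      push_neg at hpB
      have hple := hpB hpV
      rcases le_or_gt 0 (dotR v p - dotR v x) with hvd | hvd
      · have : τ * (dotR v p - dotR v x) ≤ σs * (dotR v p - dotR v x) :=
          mul_le_mul_of_nonneg_right hτσs.le hvd
        linarith
      · have hσp : dotR c p - dotR c x ≤ σ * (dotR v p - dotR v x) := by
          have := hopt p (hVP hpV); linarith
        have := mul_le_mul_of_nonpos_right hσsσ hvd.le
        linarith
  have hPopt : ∀ y ∈ P, dotR (c - σs • v) y ≤ dotR (c - σs • v) x := by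
    intro y hy
    have := le_on_hull (dotR_isLinear (c - σs • v))
      (M := dotR c x - σs * dotR v x)
      (fun p hp => by rw [dotR_combo_sub]; linarith [hVopt p hp]) y (hPV ▸ hy)
    simp only [dotR_combo_sub] at this ⊢; linarith
  obtain ⟨ps, hpsB, hpse⟩ := Finset.exists_mem_eq_sup' hBne sl
  obtain ⟨hvdps, _⟩ := hBfacts ps hpsB
  have hpsface : dotR (c - σs • v) ps = dotR (c - σs • v) x := by
    rw [dotR_combo_sub, dotR_combo_sub]
    have : sl ps = σs := by rw [hσsdef, hpse]
    rw [hsldef] at this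
    have := (div_eq_iff (ne_of_gt hvdps)).mp this
    linarith
  have hpsv : dotR v x < dotR v ps := by linarith
  obtain ⟨u, huadj, huface, huv⟩ := improving_neighbor_in_face hPV hx hPopt
    (hVP (Finset.mem_filter.mp hpsB).1) hpsface hpsv
  have hslope : dotR c u - dotR c x = σs * (dotR v u - dotR v x) := by
    rw [dotR_combo_sub, dotR_combo_sub] at huface
    linarith
  have := hloc u huadj huv
  nlinarith


set_option maxHeartbeats 2000000 in
/-- Theorem 3.5 (Slim Shadow rule): for a 0/1 polytope and `v = 1 − 2x⁰`, the start
`x⁰` is the unique `v`-minimizer, and any Shadow-rule path with auxiliary vector `v`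
starting at `x⁰` has length at most `n` and contains a `c`-maximum of `P`. -/
theorem slim_shadow_bound {n : ℕ} (P : Set (Fin n → ℝ)) (hP : IsPolytope01 P)
    (c : Fin n → ℝ) (x0 : Fin n → ℝ) (hx0 : IsVertex P x0)
    (v : Fin n → ℝ) (hv : v = fun i => 1 - 2 * x0 i) :
    (∀ y ∈ P, y ≠ x0 → dotR v x0 < dotR v y) ∧
      ∀ (k : ℕ) (x : ℕ → Fin n → ℝ), ShadowPath P c v k x → x 0 = x0 →
        k ≤ n ∧ ∃ i ≤ k, ∀ y ∈ P, dotR c y ≤ dotR c (x i) := by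
  classical
  obtain ⟨V, hVne, hV01, hPV⟩ := hP
  have hVP : (V : Set (Fin n → ℝ)) ⊆ P := hPV ▸ subset_convexHull ℝ _
  have hx0V : x0 ∈ V := vertex_mem_V hPV hx0
  have hx001 := hV01 x0 hx0V
  set g : (Fin n → ℝ) → ℕ := fun p => (Finset.univ.filter fun i => p i ≠ x0 i).card
    with hgdef
  have hdv : ∀ p ∈ V, dotR v p - dotR v x0 = (g p : ℝ) := by
    intro p hpV
    have hp01 := hV01 p hpV
    have e1 : dotR v p - dotR v x0 = ∑ i, v i * (p i - x0 i) := by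
      rw [dotR, dotR, ← Finset.sum_sub_distrib]
      exact Finset.sum_congr rfl fun i _ => by ring
    have e2 : ∀ i, v i * (p i - x0 i) = if p i ≠ x0 i then (1:ℝ) else 0 := by
      intro i
      rcases hp01 i with hp | hp <;> rcases hx001 i with hx | hx <;>
        simp [hv, hp, hx] <;> norm_num
    have e3 : ((g p : ℕ) : ℝ) = ∑ i, (if p i ≠ x0 i then (1:ℝ) else 0) := by
      rw [hgdef]
      rw [Finset.sum_ite, Finset.sum_const, Finset.sum_const]
      simp
    rw [e1, Finset.sum_congr rfl fun i _ => e2 i, ← e3]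
  have hgzero : ∀ p, g p = 0 → p = x0 := by
    intro p hp
    funext i
    by_contra hne
    have hmem : i ∈ Finset.univ.filter fun i => p i ≠ x0 i :=
      Finset.mem_filter.mpr ⟨Finset.mem_univ _, hne⟩
    rw [hgdef] at hp
    rw [Finset.card_eq_zero] at hp
    rw [hp] at hmem
    exact absurd hmem (Finset.notMem_empty i)
  have hmin : ∀ y ∈ P, y ≠ x0 → dotR v x0 < dotR v y := by
    intro y hyP hyne
    obtain ⟨lam, hl0, hl1, hl2⟩ := rep_of_mem_hull (hPV ▸ hyP)
    have hdvy : dotR v y - dotR v x0 = ∑ p ∈ V, lam p * (dotR v p - dotR v x0) := by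
      have e1 : dotR v y = ∑ p ∈ V, lam p * dotR v p := by rw [← hl2, dotR_sum_s2]
      have e3 : ∑ p ∈ V, lam p * (dotR v p - dotR v x0)
          = (∑ p ∈ V, lam p * dotR v p) - (∑ p ∈ V, lam p) * dotR v x0 := by
        rw [Finset.sum_mul, ← Finset.sum_sub_distrib]
        exact Finset.sum_congr rfl fun p _ => by ring
      rw [e3, e1, hl1, one_mul]
    have hterm : ∀ p ∈ V, 0 ≤ lam p * (dotR v p - dotR v x0) := fun p hp =>
      mul_nonneg (hl0 p hp) (by rw [hdv p hp]; positivity)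
    have hnn : 0 ≤ dotR v y - dotR v x0 := hdvy ▸ Finset.sum_nonneg hterm
    rcases hnn.lt_or_eq with h | h
    · linarith
    · exfalso
      have hzero := (Finset.sum_eq_zero_iff_of_nonneg hterm).mp (by rw [← hdvy, ← h])
      have hlam : ∀ p ∈ V, p ≠ x0 → lam p = 0 := by
        intro p hp hpne
        rcases mul_eq_zero.mp (hzero p hp) with h' | h'
        · exact h'
        · exfalso
          have hg0 : (g p : ℝ) = 0 := by rw [← hdv p hp]; linarith
          exact hpne (hgzero p (by exact_mod_cast hg0))
      apply hyne
      rw [← hl2]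
      have e4 : ∑ p ∈ V, lam p • p = lam x0 • x0 :=
        Finset.sum_eq_single x0 (fun p hp hpne => by rw [hlam p hp hpne, zero_smul])
          (fun h => absurd hx0V h)
      have e5 : lam x0 = 1 := by
        rw [← hl1]
        exact (Finset.sum_eq_single x0 (fun p hp hpne => hlam p hp hpne)
          (fun h => absurd hx0V h)).symm
      rw [e4, e5, one_smul]
  refine ⟨hmin, ?_⟩
  intro k x hpath hstart
  obtain ⟨hvert, hsteps, hend⟩ := hpath
  have hxiV : ∀ i ≤ k, x i ∈ V := fun i hi => vertex_mem_V hPV (hvert i hi)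
  have hxiP : ∀ i ≤ k, x i ∈ P := fun i hi => (hvert i hi).1
  have hgmono : ∀ i, i < k → g (x i) < g (x (i+1)) := by
    intro i hik
    have himp := (hsteps i hik).1.2
    have h1 := hdv (x i) (hxiV i hik.le)
    have h2 := hdv (x (i+1)) (hxiV (i+1) hik)
    have : (g (x i) : ℝ) < g (x (i+1)) := by linarith
    exact_mod_cast this
  have hgle : ∀ i ≤ k, i ≤ g (x i) := by
    intro i
    induction i with
    | zero => intro _; exact Nat.zero_le _
    | succ j ih =>
      intro hjk
      have hjk' : j < k := hjk
      have h1 := ih hjk'.le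
      have h2 := hgmono j hjk'
      omega
  have hkn : k ≤ n := by
    have h1 := hgle k le_rfl
    have h2 : g (x k) ≤ n := by
      rw [hgdef]
      exact (Finset.card_filter_le _ _).trans (by simp)
    omega
  refine ⟨hkn, ?_⟩
  set σ : ℕ → ℝ := fun i => dotR c (x (i+1) - x i) / dotR v (x (i+1) - x i) with hσdef
  have hΔv : ∀ i, i < k → 0 < dotR v (x (i+1)) - dotR v (x i) := by
    intro i hik
    have := (hsteps i hik).1.2
    linarith
  have hedge : ∀ i, i < k →
      dotR c (x (i+1)) - dotR c (x i) = σ i * (dotR v (x (i+1)) - dotR v (x i)) := by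
    intro i hik
    have hvd := hΔv i hik
    simp only [hσdef]
    rw [dotR_sub, dotR_sub, div_mul_cancel₀ _ (by linarith : dotR v (x (i+1)) - dotR v (x i) ≠ 0)]
  have hloc : ∀ i, i < k → ∀ u, Adjacent P (x i) u → dotR v (x i) < dotR v u →
      dotR c u - dotR c (x i) ≤ σ i * (dotR v u - dotR v (x i)) := by
    intro i hik u hadj hvu
    have hmax := (hsteps i hik).2 u ⟨hadj, hvu⟩
    have hvd : 0 < dotR v (u - x i) := by rw [dotR_sub]; linarith
    have h2 : dotR c (u - x i)
        ≤ (dotR c (x (i+1) - x i) / dotR v (x (i+1) - x i)) * dotR v (u - x i) :=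
      (div_le_iff₀ hvd).mp hmax
    have h3 : dotR c (u - x i) ≤ σ i * dotR v (u - x i) := by
      simp only [hσdef]; exact h2
    rw [dotR_sub, dotR_sub] at h3
    exact h3
  have hOpt : ∀ i, i < k →
      ∀ y ∈ P, dotR c y - σ i * dotR v y ≤ dotR c (x i) - σ i * dotR v (x i) := by
    intro i
    induction i with
    | zero =>
      intro h0k
      have hbig : ∃ s : ℝ, σ 0 ≤ s ∧
          ∀ y ∈ P, dotR c y - s * dotR v y ≤ dotR c (x 0) - s * dotR v (x 0) := by
        rcases Finset.eq_empty_or_nonempty (V.filter (fun p => p ≠ x0)) with hW | hWne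
        · refine ⟨σ 0, le_rfl, ?_⟩
          intro y hy
          have hall : ∀ p ∈ V, p = x0 := by
            intro p hp
            by_contra hne
            have : p ∈ V.filter (fun p => p ≠ x0) := Finset.mem_filter.mpr ⟨hp, hne⟩
            rw [hW] at this
            exact absurd this (Finset.notMem_empty p)
          have hle : ∀ p ∈ V, dotR (c - σ 0 • v) p ≤ dotR (c - σ 0 • v) (x 0) := by
            intro p hp
            rw [hall p hp, hstart]
          have := le_on_hull (dotR_isLinear _) hle y (hPV ▸ hy)
          simp only [dotR_combo_sub] at this
          linarith
        · set s0 : ℝ := (V.filter (fun p => p ≠ x0)).sup' hWne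
            (fun p => (dotR c p - dotR c x0) / (dotR v p - dotR v x0)) with hs0def
          refine ⟨max (σ 0) s0, le_max_left _ _, ?_⟩
          intro y hy
          have hle : ∀ p ∈ V,
              dotR (c - (max (σ 0) s0) • v) p ≤ dotR (c - (max (σ 0) s0) • v) (x 0) := by
            intro p hp
            rcases eq_or_ne p x0 with rfl | hne
            · rw [hstart]
            · have hvd : 0 < dotR v p - dotR v x0 := by
                have := hmin p (hVP hp) hne; linarith
              have hsl : (dotR c p - dotR c x0) / (dotR v p - dotR v x0) ≤ s0 := by
                rw [hs0def]
                exact Finset.le_sup'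
                  (fun p => (dotR c p - dotR c x0) / (dotR v p - dotR v x0))
                  (Finset.mem_filter.mpr ⟨hp, hne⟩)
              have hsl2 : (dotR c p - dotR c x0) / (dotR v p - dotR v x0) ≤ max (σ 0) s0 :=
                le_trans hsl (le_max_right _ _)
              rw [div_le_iff₀ hvd] at hsl2
              simp only [dotR_combo_sub]
              rw [hstart]
              nlinarith
          have := le_on_hull (dotR_isLinear _) hle y (hPV ▸ hy)
          simp only [dotR_combo_sub] at this
          linarith
      obtain ⟨s, hs0, hsopt⟩ := hbig
      exact param_step hPV (hvert 0 h0k.le) hs0 hsopt (hloc 0 h0k)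
    | succ j ih =>
      intro hjk
      have hjk' : j < k := Nat.lt_of_succ_lt hjk
      have hOj := ih hjk'
      have htrans : ∀ y ∈ P,
          dotR c y - σ j * dotR v y ≤ dotR c (x (j+1)) - σ j * dotR v (x (j+1)) := by
        intro y hy
        have h1 := hOj y hy
        have h2 := hedge j hjk'
        have e : σ j * (dotR v (x (j+1)) - dotR v (x j))
            = σ j * dotR v (x (j+1)) - σ j * dotR v (x j) := by ring
        rw [e] at h2
        linarith
      have hmono : σ (j+1) ≤ σ j := by
        have hvd := hΔv (j+1) hjk
        have h1 := htrans (x (j+1+1)) (hxiP (j+1+1) hjk)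
        have h2 := hedge (j+1) hjk
        have h3 : σ (j+1) * (dotR v (x (j+1+1)) - dotR v (x (j+1)))
            ≤ σ j * (dotR v (x (j+1+1)) - dotR v (x (j+1))) := by nlinarith
        exact le_of_mul_le_mul_right (by linarith [h3]) hvd
      exact param_step hPV (hvert (j+1) hjk.le) hmono htrans (hloc (j+1) hjk)
  have hvmax : ∀ y ∈ P, dotR v y ≤ dotR v (x k) := by
    intro y hy
    by_contra hcon
    push_neg at hcon
    obtain ⟨u, huadj, huimp⟩ := improving_neighbor hPV (hvert k le_rfl) hy hcon
    exact hend u ⟨huadj, huimp⟩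
  rcases Nat.eq_zero_or_pos k with hk0 | hkpos
  · subst hk0
    refine ⟨0, le_rfl, ?_⟩
    intro y hy
    have hy0 : y = x0 := by
      by_contra hne
      have h1 := hmin y hy hne
      have h2 := hvmax y hy
      rw [hstart] at h2
      linarith
    rw [hy0, hstart]
  · by_cases hall : ∀ i, i < k → 0 < σ i
    · refine ⟨k, le_rfl, ?_⟩
      intro y hy
      have hkm : k - 1 < k := by omega
      have hy' := hOpt (k-1) hkm y hy
      have hedge' := hedge (k-1) hkm
      have hik : k - 1 + 1 = k := by omega
      rw [hik] at hedge'
      have hσpos := hall (k-1) hkm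
      have hvle := hvmax y hy
      nlinarith
    · push_neg at hall
      obtain ⟨iw, hiwk, hiwσ⟩ := hall
      have hexists : ∃ i, i < k ∧ σ i ≤ 0 := ⟨iw, hiwk, hiwσ⟩
      obtain ⟨hi0k, hσi0⟩ := Nat.find_spec hexists
      set i0 := Nat.find hexists with hi0def
      have hprev : ∀ j, j < i0 → 0 < σ j := by
        intro j hj
        have hmin' := Nat.find_min hexists hj
        by_contra hcon'
        push_neg at hcon'
        exact hmin' ⟨lt_trans hj hi0k, hcon'⟩
      refine ⟨i0, hi0k.le, ?_⟩
      intro y hy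
      have hOi0 := hOpt i0 hi0k y hy
      rcases Nat.eq_zero_or_pos i0 with hz | hpos
      · have hvy : dotR v (x i0) ≤ dotR v y := by
          rw [hz, hstart]
          rcases eq_or_ne y x0 with rfl | hne
          · exact le_rfl
          · exact (hmin y hy hne).le
        nlinarith
      · have hkm : i0 - 1 < k := by omega
        have hOprev := hOpt (i0-1) hkm y hy
        have hedge' := hedge (i0-1) hkm
        have hieq : i0 - 1 + 1 = i0 := by omega
        rw [hieq] at hedge'
        have hσprev := hprev (i0-1) (by omega)
        rcases le_or_gt (dotR v y) (dotR v (x i0)) with hvy | hvy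
        · nlinarith
        · nlinarith
end
end
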